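/- arXiv:2603.07870 — 8 statements merged into one kernel-verified Lean document; each statement's English description precedes it below -/
import Mathlib

section
/- Let d ≥ 1 be an integer, θ ∈ (0,1), and p ≥ 1 a real number. Let Ω ⊆ ℝ^d be a nonempty bounded open set satisfying the interior measure density condition with constant C₀ > 0. Then there exists a constant C > 0, depending only on d, θ, p, C₀, the diameter of Ω (and not on f or H), such that for every function f : ℝ^d → ℝ and every H ≥ 0 with |f(x) − f(y)| ≤ H·‖x − y‖^θ for all x, y in the closure of Ω, one has sup_{x ∈ closure Ω} |f(x)| ≤ C·( H^{d/(pθ+d)} · ‖f‖_{L^p(Ω)}^{pθ/(pθ+d)} + ‖f‖_{L^p(Ω)} ). -/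
open MeasureTheory Metric Set

set_option maxHeartbeats 2000000 in
/-- Interpolation inequality involving the Hölder seminorm (Lemma `EHRLEM`, inequality (ineq:main)):
on a bounded open set with the interior measure density condition,
`‖f‖_∞ ≤ C (H^{d/(pθ+d)} ‖f‖_p^{pθ/(pθ+d)} + ‖f‖_p)` for θ-Hölder `f` with seminorm `H`. -/
theorem holder_interpolation_main
    (d : ℕ) (hd : 1 ≤ d) (θ p C₀ : ℝ) (hθ : θ ∈ Set.Ioo (0 : ℝ) 1)
    (hp : 1 ≤ p) (hC₀ : 0 < C₀)
    (Ω : Set (EuclideanSpace ℝ (Fin d))) (hΩne : Ω.Nonempty) (hΩo : IsOpen Ω)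
    (hΩb : Bornology.IsBounded Ω)
    (hdens : ∀ x ∈ closure Ω, ∀ r : ℝ, 0 < r → r ≤ Metric.diam Ω →
      ENNReal.ofReal (r ^ d / C₀) ≤ volume (Metric.ball x r ∩ Ω)) :
    ∃ C : ℝ, 0 < C ∧
      ∀ (f : EuclideanSpace ℝ (Fin d) → ℝ) (H : ℝ), 0 ≤ H →
        (∀ x ∈ closure Ω, ∀ y ∈ closure Ω, |f x - f y| ≤ H * ‖x - y‖ ^ θ) →
        ∀ x ∈ closure Ω,
          |f x| ≤ C * (H ^ ((d : ℝ) / (p * θ + d)) *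
              ((∫ y in Ω, |f y| ^ p) ^ (1 / p)) ^ (p * θ / (p * θ + d)) +
            (∫ y in Ω, |f y| ^ p) ^ (1 / p)) := by
  obtain ⟨x₀, hx₀⟩ := hΩne
  have hθ0 : (0 : ℝ) < θ := hθ.1
  have hθne : θ ≠ 0 := ne_of_gt hθ0
  have hp0 : (0 : ℝ) < p := lt_of_lt_of_le one_pos hp
  -- nontriviality of Ω and positivity of the diameter
  have hΩnt : Ω.Nontrivial := by
    obtain ⟨ε, hε, hball⟩ := Metric.isOpen_iff.1 hΩo x₀ hx₀
    have hnorm : ‖(ε / 2) • EuclideanSpace.single (⟨0, hd⟩ : Fin d) (1 : ℝ)‖ = ε / 2 := by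
      simp [norm_smul, EuclideanSpace.norm_single, abs_of_pos hε, abs_div]
    have hmem : x₀ + (ε / 2) • EuclideanSpace.single (⟨0, hd⟩ : Fin d) (1 : ℝ) ∈ Ω := by
      apply hball
      rw [Metric.mem_ball, dist_eq_norm]
      simpa [hnorm] using by linarith
    have hne : x₀ + (ε / 2) • EuclideanSpace.single (⟨0, hd⟩ : Fin d) (1 : ℝ) ≠ x₀ := by
      intro h
      have h2 : (ε / 2) • EuclideanSpace.single (⟨0, hd⟩ : Fin d) (1 : ℝ) = 0 := by
        have := congrArg (fun z => z - x₀) h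
        simpa using this
      rw [h2] at hnorm
      simp at hnorm
      linarith
    exact ⟨_, hmem, x₀, hx₀, hne⟩
  have hD : 0 < Metric.diam Ω := by
    rw [Metric.diam, ENNReal.toReal_pos_iff]
    exact ⟨EMetric.diam_pos_iff.2 hΩnt, lt_top_iff_ne_top.2 hΩb.ediam_ne_top⟩
  set D := Metric.diam Ω with hDdef
  have hΩvol : volume Ω < ⊤ := hΩb.measure_lt_top
  -- constants
  set β : ℝ := (d : ℝ) / θ with hβdef
  have hβ : 0 < β := by positivity
  set α : ℝ := p + β with hαdef
  have hα : 0 < α := by positivity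
  have hαne : α ≠ 0 := ne_of_gt hα
  have hpθd : 0 < p * θ + (d : ℝ) := by positivity
  set C₁ : ℝ := ((2 : ℝ) ^ α * C₀) ^ α⁻¹ with hC₁def
  have hC₁ : 0 < C₁ := by positivity
  set C₂ : ℝ := 2 * (C₀ / D ^ d) ^ (1 / p) with hC₂def
  have hC₂ : 0 < C₂ := by positivity
  refine ⟨max C₁ C₂, lt_of_lt_of_le hC₁ (le_max_left _ _), ?_⟩
  intro f H hH hHolder x hx
  set C : ℝ := max C₁ C₂ with hCdef
  have hC : 0 < C := lt_of_lt_of_le hC₁ (le_max_left _ _)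
  set M : ℝ := |f x| with hMdef
  have hM0 : 0 ≤ M := abs_nonneg _
  set I : ℝ := ∫ y in Ω, |f y| ^ p with hIdef
  have hI : 0 ≤ I := integral_nonneg fun y => Real.rpow_nonneg (abs_nonneg _) p
  set N : ℝ := I ^ (1 / p) with hNdef
  have hN : 0 ≤ N := Real.rpow_nonneg hI _
  have hNp : N ^ p = I := by
    rw [hNdef, one_div]; exact Real.rpow_inv_rpow hI (ne_of_gt hp0)
  have hterm1 : 0 ≤ H ^ ((d : ℝ) / (p * θ + d)) * N ^ (p * θ / (p * θ + d)) :=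
    mul_nonneg (Real.rpow_nonneg hH _) (Real.rpow_nonneg hN _)
  -- continuity of f on Ω
  have hfc : ContinuousOn f Ω := by
    intro z hz
    have hz' : z ∈ closure Ω := subset_closure hz
    rw [ContinuousWithinAt, tendsto_iff_dist_tendsto_zero]
    have h1 : Filter.Tendsto (fun y : EuclideanSpace ℝ (Fin d) => ‖y - z‖)
        (nhdsWithin z Ω) (nhds 0) := by
      have : Filter.Tendsto (fun y : EuclideanSpace ℝ (Fin d) => ‖y - z‖)
          (nhds z) (nhds ‖z - z‖) :=
        ((continuous_id.sub continuous_const).norm).tendsto z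
      simpa using this.mono_left nhdsWithin_le_nhds
    have h2 : Filter.Tendsto (fun t : ℝ => H * t ^ θ) (nhds 0) (nhds 0) := by
      have hc : ContinuousAt (fun t : ℝ => t ^ θ) 0 :=
        Real.continuousAt_rpow_const 0 θ (Or.inr hθ0.le)
      have := (hc.tendsto).const_mul H
      simpa [Real.zero_rpow hθne] using this
    have h3 : Filter.Tendsto (fun y : EuclideanSpace ℝ (Fin d) => H * ‖y - z‖ ^ θ)
        (nhdsWithin z Ω) (nhds 0) := by
      exact h2.comp h1
    refine squeeze_zero' (Filter.Eventually.of_forall fun y => dist_nonneg) ?_ h3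
    filter_upwards [self_mem_nhdsWithin] with y hy
    rw [Real.dist_eq]
    exact hHolder y (subset_closure hy) z hz'
  -- integrability of |f|^p on Ω
  have hgc : ContinuousOn (fun y => |f y| ^ p) Ω :=
    (hfc.abs).rpow_const fun y _ => Or.inr hp0.le
  have hgmeas : AEStronglyMeasurable (fun y => |f y| ^ p) (volume.restrict Ω) :=
    hgc.aestronglyMeasurable hΩo.measurableSet
  have hKbd : ∀ y ∈ Ω, |f y| ≤ |f x₀| + H * D ^ θ := by
    intro y hy
    have h1 := hHolder y (subset_closure hy) x₀ (subset_closure hx₀)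
    have h2 : ‖y - x₀‖ ≤ D := by
      rw [← dist_eq_norm]
      exact Metric.dist_le_diam_of_mem hΩb hy hx₀
    have h3 : H * ‖y - x₀‖ ^ θ ≤ H * D ^ θ :=
      mul_le_mul_of_nonneg_left (Real.rpow_le_rpow (norm_nonneg _) h2 hθ0.le) hH
    have h4 : |f y| - |f x₀| ≤ |f y - f x₀| := abs_sub_abs_le_abs_sub _ _
    linarith
  have hInt : IntegrableOn (fun y => |f y| ^ p) Ω := by
    refine ⟨hgmeas, HasFiniteIntegral.restrict_of_bounded
      (C := (|f x₀| + H * D ^ θ) ^ p) hΩvol ?_⟩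
    filter_upwards [ae_restrict_mem hΩo.measurableSet] with y hy
    rw [Real.norm_eq_abs, abs_of_nonneg (Real.rpow_nonneg (abs_nonneg _) p)]
    exact Real.rpow_le_rpow (abs_nonneg _) (hKbd y hy) hp0.le
  -- the key quantitative estimate
  have key : ∀ r : ℝ, 0 < r → r ≤ D →
      (∀ y ∈ Metric.ball x r ∩ Ω, M / 2 ≤ |f y|) →
      (M / 2) ^ p * (r ^ d / C₀) ≤ I := by
    intro r hr hrD hbd
    have hsub : Metric.ball x r ∩ Ω ⊆ Ω := inter_subset_right
    have hmeas : MeasurableSet (Metric.ball x r ∩ Ω) :=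
      (Metric.isOpen_ball.inter hΩo).measurableSet
    have hvol_lt : volume (Metric.ball x r ∩ Ω) < ⊤ :=
      lt_of_le_of_lt (measure_mono hsub) hΩvol
    have h1 : (M / 2) ^ p * (volume (Metric.ball x r ∩ Ω)).toReal ≤
        ∫ y in Metric.ball x r ∩ Ω, |f y| ^ p := by
      refine setIntegral_ge_of_const_le_real hmeas hvol_lt.ne (fun y hy => ?_)
        (hInt.mono_set hsub)
      exact Real.rpow_le_rpow (by positivity) (hbd y hy) hp0.le
    have h2 : (∫ y in Metric.ball x r ∩ Ω, |f y| ^ p) ≤ I := by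
      rw [hIdef]
      exact setIntegral_mono_set hInt
        (Filter.Eventually.of_forall fun y => Real.rpow_nonneg (abs_nonneg _) p)
        (HasSubset.Subset.eventuallyLE hsub)
    have h3 : r ^ d / C₀ ≤ (volume (Metric.ball x r ∩ Ω)).toReal := by
      have hd1 := hdens x hx r hr hrD
      have := ENNReal.toReal_mono hvol_lt.ne hd1
      rwa [ENNReal.toReal_ofReal (by positivity)] at this
    calc (M / 2) ^ p * (r ^ d / C₀)
        ≤ (M / 2) ^ p * (volume (Metric.ball x r ∩ Ω)).toReal :=
          mul_le_mul_of_nonneg_left h3 (by positivity)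
      _ ≤ ∫ y in Metric.ball x r ∩ Ω, |f y| ^ p := h1
      _ ≤ I := h2
  -- main case split
  rcases eq_or_lt_of_le hM0 with hM | hM
  · rw [← hM]
    exact mul_nonneg hC.le (add_nonneg hterm1 hN)
  have hDθ : 0 < D ^ θ := Real.rpow_pos_of_pos hD θ
  have hDd : 0 < D ^ d := pow_pos hD d
  rcases le_or_gt (2 * H * D ^ θ) M with hcase | hcase
  · -- large M: use r = D
    have hbd : ∀ y ∈ Metric.ball x D ∩ Ω, M / 2 ≤ |f y| := by
      rintro y ⟨hyB, hyΩ⟩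
      have h1 := hHolder x hx y (subset_closure hyΩ)
      have h2 : ‖x - y‖ ≤ D := by
        rw [← dist_eq_norm, dist_comm]
        exact (Metric.mem_ball.1 hyB).le
      have h3 : H * ‖x - y‖ ^ θ ≤ H * D ^ θ :=
        mul_le_mul_of_nonneg_left (Real.rpow_le_rpow (norm_nonneg _) h2 hθ0.le) hH
      have h4 : M - |f y| ≤ |f x - f y| := abs_sub_abs_le_abs_sub _ _
      linarith
    have hkey := key D hD le_rfl hbd
    rw [← hNp] at hkey
    have h4 : (M / 2) ^ p ≤ C₀ / D ^ d * N ^ p := by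
      rw [div_mul_eq_mul_div, le_div_iff₀ hDd]
      rw [← mul_div_assoc, div_le_iff₀ hC₀] at hkey
      nlinarith [hkey]
    have h5 : M / 2 ≤ (C₀ / D ^ d) ^ (1 / p) * N := by
      have h6 := Real.rpow_le_rpow (by positivity) h4 (by positivity : (0:ℝ) ≤ 1 / p)
      rw [one_div] at h6
      rw [Real.rpow_rpow_inv (by positivity) (ne_of_gt hp0)] at h6
      rw [Real.mul_rpow (by positivity) (by positivity)] at h6
      rw [Real.rpow_rpow_inv hN (ne_of_gt hp0)] at h6
      rw [one_div]
      exact h6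
    have hC₂C : C₂ ≤ C := le_max_right _ _
    calc M ≤ C₂ * N := by rw [hC₂def, mul_assoc]; linarith [h5]
      _ ≤ C * N := mul_le_mul_of_nonneg_right hC₂C hN
      _ ≤ C * (H ^ ((d : ℝ) / (p * θ + d)) * N ^ (p * θ / (p * θ + d)) + N) :=
          mul_le_mul_of_nonneg_left (le_add_of_nonneg_left hterm1) hC.le
  · -- small M: choose r = (M / (2H))^(1/θ)
    have hH0 : 0 < H := by
      rcases lt_or_ge 0 H with h | h
      · exact h
      · exfalso; nlinarith [hDθ]
    have hq : 0 < M / (2 * H) := by positivity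
    set r : ℝ := (M / (2 * H)) ^ θ⁻¹ with hrdef
    have hr : 0 < r := Real.rpow_pos_of_pos hq _
    have hrθ : r ^ θ = M / (2 * H) := Real.rpow_inv_rpow hq.le hθne
    have h6 : M / (2 * H) ≤ D ^ θ := by
      rw [div_le_iff₀ (by positivity)]
      calc M ≤ 2 * H * D ^ θ := hcase.le
        _ = D ^ θ * (2 * H) := by ring
    have hrD : r ≤ D := by
      calc r ≤ (D ^ θ) ^ θ⁻¹ := Real.rpow_le_rpow hq.le h6 (by positivity)
        _ = D := Real.rpow_rpow_inv hD.le hθne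
    have hbd : ∀ y ∈ Metric.ball x r ∩ Ω, M / 2 ≤ |f y| := by
      rintro y ⟨hyB, hyΩ⟩
      have h1 := hHolder x hx y (subset_closure hyΩ)
      have h2 : ‖x - y‖ ≤ r := by
        rw [← dist_eq_norm, dist_comm]
        exact (Metric.mem_ball.1 hyB).le
      have h3 : H * ‖x - y‖ ^ θ ≤ H * r ^ θ :=
        mul_le_mul_of_nonneg_left (Real.rpow_le_rpow (norm_nonneg _) h2 hθ0.le) hH
      have h3' : H * r ^ θ = M / 2 := by
        rw [hrθ]; field_simp
      have h4 : M - |f y| ≤ |f x - f y| := abs_sub_abs_le_abs_sub _ _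
      linarith
    have hkey := key r hr hrD hbd
    rw [← hNp] at hkey
    have hrd : (r : ℝ) ^ d = (M / (2 * H)) ^ β := by
      rw [hrdef, ← Real.rpow_natCast ((M / (2 * H)) ^ θ⁻¹) d, ← Real.rpow_mul hq.le]
      congr 1
      rw [hβdef, inv_mul_eq_div]
    rw [hrd] at hkey
    -- turn hkey into M^α ≤ 2^α * C₀ * (H^β * N^p)
    have hexp1 : (M / 2) ^ p = M ^ p / 2 ^ p := Real.div_rpow hM.le (by norm_num) p
    have hexp2 : (M / (2 * H)) ^ β = M ^ β / (2 * H) ^ β := Real.div_rpow hM.le (by positivity) β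
    have hexp3 : ((2 : ℝ) * H) ^ β = 2 ^ β * H ^ β := Real.mul_rpow (by norm_num) hH0.le
    have hexp4 : M ^ p * M ^ β = M ^ α := by
      rw [hαdef, Real.rpow_add hM]
    have hexp5 : (2 : ℝ) ^ p * 2 ^ β = 2 ^ α := by
      rw [hαdef, Real.rpow_add (by norm_num : (0:ℝ) < 2)]
    have h2α : (0 : ℝ) < 2 ^ α := Real.rpow_pos_of_pos (by norm_num) α
    have hHβ : (0 : ℝ) < H ^ β := Real.rpow_pos_of_pos hH0 β
    have hMα : M ^ α ≤ 2 ^ α * C₀ * (H ^ β * N ^ p) := by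
      rw [← mul_div_assoc, div_le_iff₀ hC₀] at hkey
      have hlhs : (M / 2) ^ p * (M / (2 * H)) ^ β = M ^ α / (2 ^ α * H ^ β) := by
        rw [hexp1, hexp2, hexp3, div_mul_div_comm, hexp4, ← hexp5]
        ring
      rw [hlhs, div_le_iff₀ (by positivity)] at hkey
      nlinarith [hkey]
    have hNp0 : 0 ≤ N ^ p := Real.rpow_nonneg hN p
    have hfinal : M ≤ C₁ * (H ^ (β * α⁻¹) * N ^ (p * α⁻¹)) := by
      have h7 := Real.rpow_le_rpow (by positivity) hMα (by positivity : (0:ℝ) ≤ α⁻¹)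
      rw [Real.rpow_rpow_inv hM.le hαne] at h7
      rw [Real.mul_rpow (by positivity) (by positivity)] at h7
      rw [Real.mul_rpow hHβ.le hNp0] at h7
      rw [← Real.rpow_mul hH, ← Real.rpow_mul hN] at h7
      exact h7
    have hαθ : p * θ + (d : ℝ) = α * θ := by
      rw [hαdef, hβdef]
      field_simp
    have he1 : β * α⁻¹ = (d : ℝ) / (p * θ + d) := by
      rw [hαθ, hβdef, ← div_eq_mul_inv, div_div, mul_comm θ α]
    have he2 : p * α⁻¹ = p * θ / (p * θ + d) := by
      rw [hαθ, mul_comm α θ, ← div_div, mul_div_assoc, div_self hθne, mul_one,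
        div_eq_mul_inv]
    rw [he1, he2] at hfinal
    calc M ≤ C₁ * (H ^ ((d : ℝ) / (p * θ + d)) * N ^ (p * θ / (p * θ + d))) := hfinal
      _ ≤ C * (H ^ ((d : ℝ) / (p * θ + d)) * N ^ (p * θ / (p * θ + d))) :=
          mul_le_mul_of_nonneg_right (le_max_left _ _) hterm1
      _ ≤ C * (H ^ ((d : ℝ) / (p * θ + d)) * N ^ (p * θ / (p * θ + d)) + N) :=
          mul_le_mul_of_nonneg_left (le_add_of_nonneg_right hN) hC.le
end

section
/- Let d ≥ 1 be an integer, θ ∈ (0,1), and p ≥ 1 a real number. Let Ω ⊆ ℝ^d be a nonempty bounded open set satisfying the interior measure density condition with constant C₀ > 0. Then there exists a constant C > 0, depending only on d, θ, p, C₀, the diameter of Ω and the Lebesgue measure of Ω (and not on f or H), such that for every function f : ℝ^d → ℝ and every H ≥ 0 with |f(x) − f(y)| ≤ H·‖x − y‖^θ for all x, y in the closure of Ω, one has sup_{x ∈ closure Ω} |f(x)| ≤ C·( sup_{x ∈ closure Ω} |f(x)| + H )^{d/(pθ+d)} · ‖f‖_{L^p(Ω)}^{pθ/(pθ+d)}.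 -/
open MeasureTheory Metric Set

set_option maxHeartbeats 1000000 in
/-- Interpolation inequality involving the Hölder norm (Lemma `EHRLEM`, inequality (ineq:full)):
`‖f‖_∞ ≤ C ‖f‖_{C^θ}^{d/(pθ+d)} ‖f‖_p^{pθ/(pθ+d)}`, where the `C^θ`-norm is
`sup_{closure Ω} |f| + H` with `H` the Hölder seminorm. -/
theorem holder_interpolation_full
    (d : ℕ) (hd : 1 ≤ d) (θ p C₀ : ℝ) (hθ : θ ∈ Set.Ioo (0 : ℝ) 1)
    (hp : 1 ≤ p) (hC₀ : 0 < C₀)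
    (Ω : Set (EuclideanSpace ℝ (Fin d))) (hΩne : Ω.Nonempty) (hΩo : IsOpen Ω)
    (hΩb : Bornology.IsBounded Ω)
    (hdens : ∀ x ∈ closure Ω, ∀ r : ℝ, 0 < r → r ≤ Metric.diam Ω →
      ENNReal.ofReal (r ^ d / C₀) ≤ volume (Metric.ball x r ∩ Ω)) :
    ∃ C : ℝ, 0 < C ∧
      ∀ (f : EuclideanSpace ℝ (Fin d) → ℝ) (H : ℝ), 0 ≤ H →
        (∀ x ∈ closure Ω, ∀ y ∈ closure Ω, |f x - f y| ≤ H * ‖x - y‖ ^ θ) →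
        ∀ x ∈ closure Ω,
          |f x| ≤ C * ((⨆ y ∈ closure Ω, |f y|) + H) ^ ((d : ℝ) / (p * θ + d)) *
              ((∫ y in Ω, |f y| ^ p) ^ (1 / p)) ^ (p * θ / (p * θ + d)) := by
  obtain ⟨hθ0, hθ1⟩ := hθ
  have hp0 : (0:ℝ) < p := lt_of_lt_of_le one_pos hp
  have hd0 : (0:ℝ) < (d:ℝ) := by
    have : 0 < d := hd
    exact_mod_cast this
  have hq0 : (0:ℝ) < p * θ + (d:ℝ) := by positivity
  set D := Metric.diam Ω with hDdef
  obtain ⟨x₀, hx₀⟩ := hΩne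
  have hDpos : 0 < D := by
    obtain ⟨ε, hε, hball⟩ := Metric.isOpen_iff.1 hΩo x₀ hx₀
    set y₀ := x₀ + EuclideanSpace.single (⟨0, hd⟩ : Fin d) (ε/2) with hy₀def
    have hdist : dist y₀ x₀ = ε / 2 := by
      rw [dist_eq_norm, hy₀def, add_sub_cancel_left, EuclideanSpace.norm_single,
        Real.norm_eq_abs, abs_of_pos (by linarith)]
    have hy₀ : y₀ ∈ Ω := hball (by rw [Metric.mem_ball, hdist]; linarith)
    have := Metric.dist_le_diam_of_mem hΩb hy₀ hx₀
    rw [hdist] at this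
    linarith
  set A := (d:ℝ) / (p * θ + (d:ℝ)) with hAdef
  set B := p * θ / (p * θ + (d:ℝ)) with hBdef
  have hA0 : 0 < A := by positivity
  have hB0 : 0 < B := by positivity
  have hAB : A + B = 1 := by rw [hAdef, hBdef]; field_simp; ring
  set C₁ := 2 * C₀ ^ (θ / (p * θ + (d:ℝ))) with hC₁def
  set K := 2 * (C₀ / D ^ d) ^ (1/p) with hKdef
  have hC₁0 : 0 < C₁ := by positivity
  have hK0 : 0 < K := by positivity
  set C := C₁ + K ^ B with hCdef
  have hC0 : 0 < C := by positivity
  refine ⟨C, hC0, ?_⟩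
  intro f H hH hHol x hx
  set M := ⨆ y ∈ closure Ω, |f y| with hMdef
  set I := ∫ y in Ω, |f y| ^ p with hIdef
  set N := I ^ (1/p) with hNdef
  have hΩm : MeasurableSet Ω := hΩo.measurableSet
  have hΩfin : volume Ω < ⊤ := hΩb.measure_lt_top
  -- uniform bound on closure
  set Bd := |f x₀| + H * D ^ θ with hBddef
  have hbd : ∀ y ∈ closure Ω, |f y| ≤ Bd := by
    intro y hy
    have h1 : |f y - f x₀| ≤ H * ‖y - x₀‖ ^ θ := hHol y hy x₀ (subset_closure hx₀)
    have h2 : ‖y - x₀‖ ≤ D := by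
      rw [← dist_eq_norm]
      calc dist y x₀ ≤ Metric.diam (closure Ω) :=
            Metric.dist_le_diam_of_mem hΩb.closure hy (subset_closure hx₀)
        _ = D := by rw [Metric.diam_closure]
    have h3 : ‖y - x₀‖ ^ θ ≤ D ^ θ := Real.rpow_le_rpow (norm_nonneg _) h2 hθ0.le
    have h4 := abs_sub_abs_le_abs_sub (f y) (f x₀)
    have h5 : H * ‖y - x₀‖ ^ θ ≤ H * D ^ θ := mul_le_mul_of_nonneg_left h3 hH
    rw [hBddef]; linarith
  have hMbdd : BddAbove (Set.range fun y => ⨆ _ : y ∈ closure Ω, |f y|) := by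
    refine ⟨max Bd 0, ?_⟩
    rintro _ ⟨y, rfl⟩
    show (⨆ _ : y ∈ closure Ω, |f y|) ≤ max Bd 0
    by_cases hy : y ∈ closure Ω
    · rw [ciSup_pos hy]; exact le_max_of_le_left (hbd y hy)
    · simp [hy]
  have haM : |f x| ≤ M := by
    rw [hMdef]
    have h1 : |f x| = ⨆ _ : x ∈ closure Ω, |f x| := by rw [ciSup_pos hx]
    rw [h1]
    exact le_ciSup hMbdd x
  have hM0 : 0 ≤ M := (abs_nonneg _).trans haM
  have hMH : |f x| ≤ M + H := by linarith
  -- continuity of f on the closure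
  have hfc : ContinuousOn f (closure Ω) := by
    intro y hy
    rw [Metric.continuousWithinAt_iff]
    intro ε hε
    refine ⟨(ε / (H + 1)) ^ (1/θ), by positivity, fun {z} hz hdz => ?_⟩
    have h1 : |f z - f y| ≤ H * ‖z - y‖ ^ θ := hHol z hz y hy
    have h3 : ((ε / (H + 1)) ^ (1/θ)) ^ θ = ε / (H + 1) := by
      rw [← Real.rpow_mul (by positivity), one_div, inv_mul_cancel₀ hθ0.ne', Real.rpow_one]
    have h2 : ‖z - y‖ ^ θ ≤ ε / (H + 1) := by
      rw [← h3]
      exact Real.rpow_le_rpow (norm_nonneg _) (by rw [← dist_eq_norm]; exact hdz.le) hθ0.le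
    rw [Real.dist_eq]
    have h4 : H * ‖z - y‖ ^ θ ≤ H * (ε / (H + 1)) := mul_le_mul_of_nonneg_left h2 hH
    have h5 : H * (ε / (H + 1)) < ε := by
      rw [mul_div_assoc', div_lt_iff₀ (by positivity)]
      nlinarith
    linarith
  -- integrability
  have hint : IntegrableOn (fun y => |f y| ^ p) Ω := by
    have hcont : ContinuousOn (fun y => |f y| ^ p) Ω :=
      ContinuousOn.rpow_const ((hfc.mono subset_closure).abs) (fun y _ => Or.inr hp0.le)
    refine Integrable.mono' (g := fun _ => Bd ^ p)
      (integrableOn_const hΩfin.ne enorm_ne_top) (hcont.aestronglyMeasurable hΩm) ?_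
    filter_upwards [ae_restrict_mem hΩm] with y hy
    rw [Real.norm_eq_abs, abs_of_nonneg (Real.rpow_nonneg (abs_nonneg _) _)]
    exact Real.rpow_le_rpow (abs_nonneg _) (hbd y (subset_closure hy)) hp0.le
  have hI0 : 0 ≤ I := setIntegral_nonneg hΩm fun y _ => Real.rpow_nonneg (abs_nonneg _) p
  have hN0 : 0 ≤ N := Real.rpow_nonneg hI0 _
  -- the key lower bound on the integral
  have key : ∀ r : ℝ, 0 < r → r ≤ D → H * r ^ θ ≤ |f x| / 2 →
      (|f x| / 2) ^ p * r ^ d / C₀ ≤ I := by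
    intro r hr hrD hra
    set S := Metric.ball x r ∩ Ω with hSdef
    have hSm : MeasurableSet S := measurableSet_ball.inter hΩm
    have hSfin : volume S ≠ ⊤ :=
      ((measure_mono inter_subset_left).trans_lt measure_ball_lt_top).ne
    have hvol : r ^ d / C₀ ≤ (volume S).toReal := by
      have h2 := hdens x hx r hr hrD
      calc r ^ d / C₀ = (ENNReal.ofReal (r ^ d / C₀)).toReal :=
            (ENNReal.toReal_ofReal (by positivity)).symm
        _ ≤ (volume S).toReal := ENNReal.toReal_mono hSfin h2
    have hlow : ∀ y ∈ S, (|f x| / 2) ^ p ≤ |f y| ^ p := by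
      rintro y ⟨hy1, hy2⟩
      have hyc : y ∈ closure Ω := subset_closure hy2
      have h1 : |f x - f y| ≤ H * ‖x - y‖ ^ θ := hHol x hx y hyc
      have h2 : ‖x - y‖ ^ θ ≤ r ^ θ := by
        refine Real.rpow_le_rpow (norm_nonneg _) ?_ hθ0.le
        rw [← dist_eq_norm, dist_comm]
        exact (Metric.mem_ball.1 hy1).le
      have h3 : H * ‖x - y‖ ^ θ ≤ |f x| / 2 :=
        le_trans (mul_le_mul_of_nonneg_left h2 hH) hra
      have h4 := abs_sub_abs_le_abs_sub (f x) (f y)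
      exact Real.rpow_le_rpow (by positivity) (by linarith) hp0.le
    have hint' : IntegrableOn (fun y => |f y| ^ p) S := hint.mono_set inter_subset_right
    have h5 : (|f x| / 2) ^ p * (volume S).toReal ≤ ∫ y in S, |f y| ^ p :=
      by have := setIntegral_ge_of_const_le_real hSm hSfin hlow hint'; exact this
    have h6 : (∫ y in S, |f y| ^ p) ≤ I := by
      rw [hIdef]
      refine setIntegral_mono_set hint ?_ (HasSubset.Subset.eventuallyLE inter_subset_right)
      exact Filter.Eventually.of_forall fun y => Real.rpow_nonneg (abs_nonneg _) _
    have h7 : (|f x| / 2) ^ p * (r ^ d / C₀) ≤ (|f x| / 2) ^ p * (volume S).toReal :=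
      mul_le_mul_of_nonneg_left hvol (by positivity)
    calc (|f x| / 2) ^ p * r ^ d / C₀ = (|f x| / 2) ^ p * (r ^ d / C₀) := by ring
      _ ≤ (|f x| / 2) ^ p * (volume S).toReal := h7
      _ ≤ ∫ y in S, |f y| ^ p := h5
      _ ≤ I := h6
  rcases eq_or_lt_of_le (abs_nonneg (f x)) with ha | ha
  · rw [← ha]
    have h1 : (0:ℝ) ≤ (M + H) ^ A := Real.rpow_nonneg (by linarith) _
    have h2 : (0:ℝ) ≤ N ^ B := Real.rpow_nonneg hN0 _
    positivity
  by_cases hcase : H * D ^ θ ≤ |f x| / 2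
  · -- case 2 : use r = D
    have hkey := key D hDpos le_rfl hcase
    have h1 : (|f x| / 2) ^ p ≤ C₀ / D ^ d * I := by
      rw [div_le_iff₀ hC₀] at hkey
      rw [div_mul_eq_mul_div, le_div_iff₀ (pow_pos hDpos d)]
      linarith
    have h2 : |f x| / 2 ≤ (C₀ / D ^ d * I) ^ (1/p) := by
      have h3 := Real.rpow_le_rpow (by positivity) h1 (by positivity : (0:ℝ) ≤ 1/p)
      rw [one_div]
      rw [one_div] at h3
      rwa [Real.rpow_rpow_inv (by positivity) hp0.ne'] at h3
    have h4 : |f x| ≤ K * N := by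
      rw [hKdef, hNdef]
      have h5 : (C₀ / D ^ d * I) ^ (1/p) = (C₀ / D ^ d) ^ (1/p) * I ^ (1/p) :=
        Real.mul_rpow (by positivity) hI0
      rw [h5] at h2
      linarith
    have h5 : |f x| ^ A ≤ (M + H) ^ A := Real.rpow_le_rpow (abs_nonneg _) hMH hA0.le
    have h6 : |f x| ^ B ≤ (K * N) ^ B := Real.rpow_le_rpow (abs_nonneg _) h4 hB0.le
    have h7 : (K * N) ^ B = K ^ B * N ^ B := Real.mul_rpow hK0.le hN0
    have h8 : 0 ≤ (M + H) ^ A := Real.rpow_nonneg (by linarith) _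
    have h9 : 0 ≤ N ^ B := Real.rpow_nonneg hN0 _
    have hKC : K ^ B ≤ C := by rw [hCdef]; linarith
    calc |f x| = |f x| ^ A * |f x| ^ B := by
          rw [← Real.rpow_add ha, hAB, Real.rpow_one]
      _ ≤ (M + H) ^ A * (K ^ B * N ^ B) := by
          rw [← h7]
          exact mul_le_mul h5 h6 (Real.rpow_nonneg (abs_nonneg _) _) h8
      _ = K ^ B * ((M + H) ^ A * N ^ B) := by ring
      _ ≤ C * ((M + H) ^ A * N ^ B) :=
          mul_le_mul_of_nonneg_right hKC (mul_nonneg h8 h9)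
      _ = C * (M + H) ^ A * N ^ B := by ring
  · -- case 1
    push_neg at hcase
    have hH0 : 0 < H := by
      rcases hH.eq_or_lt with h | h
      · exfalso
        rw [← h, zero_mul] at hcase
        linarith
      · exact h
    set t := |f x| / (2 * H) with htdef
    have ht0 : 0 < t := by positivity
    set r := t ^ θ⁻¹ with hrdef
    have hr0 : 0 < r := Real.rpow_pos_of_pos ht0 _
    have htD : t ≤ D ^ θ := by
      rw [htdef, div_le_iff₀ (by positivity)]
      nlinarith
    have hrD : r ≤ D := by
      calc r ≤ (D ^ θ) ^ θ⁻¹ := Real.rpow_le_rpow ht0.le htD (by positivity)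
        _ = D := Real.rpow_rpow_inv hDpos.le hθ0.ne'
    have hrθ : r ^ θ = t := Real.rpow_inv_rpow ht0.le hθ0.ne'
    have hcond : H * r ^ θ ≤ |f x| / 2 := by
      have he : H * t = |f x| / 2 := by
        rw [htdef]
        field_simp
      rw [hrθ, he]
    have hkey := key r hr0 hrD hcond
    have hrd : (r : ℝ) ^ (d:ℕ) = t ^ ((d:ℝ)/θ) := by
      rw [hrdef, ← Real.rpow_natCast (t ^ θ⁻¹) d, ← Real.rpow_mul ht0.le]
      congr 1
      field_simp
    set q := p + (d:ℝ)/θ with hqdef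
    have hqpos : 0 < q := by positivity
    have hqθ : q * θ = p * θ + (d:ℝ) := by
      rw [hqdef]
      field_simp
    have hq_inv : q⁻¹ = θ / (p * θ + (d:ℝ)) := by
      rw [eq_div_iff hq0.ne', ← hqθ, ← mul_assoc, inv_mul_cancel₀ hqpos.ne', one_mul]
    have hIpos : 0 < I := lt_of_lt_of_le (by positivity) hkey
    have h1 : |f x| ^ q ≤ (2 ^ p * (2*H) ^ ((d:ℝ)/θ) * C₀) * I := by
      have e1 : (|f x|/2) ^ p = |f x| ^ p / 2 ^ p :=
        Real.div_rpow (abs_nonneg (f x)) (by norm_num : (0:ℝ) ≤ 2) p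
      have e2 : t ^ ((d:ℝ)/θ) = |f x| ^ ((d:ℝ)/θ) / (2*H) ^ ((d:ℝ)/θ) := by
        rw [htdef]; exact Real.div_rpow (abs_nonneg (f x)) (by positivity : (0:ℝ) ≤ 2*H) ((d:ℝ)/θ)
      rw [hrd, e2, e1, div_mul_div_comm, ← Real.rpow_add ha, ← hqdef, div_div,
        div_le_iff₀ (by positivity)] at hkey
      calc |f x| ^ q ≤ I * (2 ^ p * (2*H) ^ ((d:ℝ)/θ) * C₀) := hkey
        _ = (2 ^ p * (2*H) ^ ((d:ℝ)/θ) * C₀) * I := by ring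
    have h2 : |f x| ≤ ((2 ^ p * (2*H) ^ ((d:ℝ)/θ) * C₀) * I) ^ q⁻¹ := by
      have h3 := Real.rpow_le_rpow (by positivity) h1 (by positivity : (0:ℝ) ≤ q⁻¹)
      rwa [Real.rpow_rpow_inv (abs_nonneg _) hqpos.ne'] at h3
    have e4 : ((2 ^ p * (2*H) ^ ((d:ℝ)/θ) * C₀) * I) ^ q⁻¹
        = 2 ^ (p * q⁻¹) * (2*H) ^ (((d:ℝ)/θ) * q⁻¹) * C₀ ^ q⁻¹ * I ^ q⁻¹ := by
      rw [Real.mul_rpow (by positivity) hI0, Real.mul_rpow (by positivity) hC₀.le,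
        Real.mul_rpow (by positivity) (by positivity),
        ← Real.rpow_mul (by norm_num : (0:ℝ) ≤ 2),
        ← Real.rpow_mul (by positivity : (0:ℝ) ≤ 2*H)]
    have eB : p * q⁻¹ = B := by rw [hq_inv, hBdef]; field_simp
    have eA : ((d:ℝ)/θ) * q⁻¹ = A := by
      rw [hq_inv, hAdef]
      field_simp
    have eI : I ^ q⁻¹ = N ^ B := by
      rw [hNdef, ← Real.rpow_mul hI0]
      congr 1
      rw [hq_inv, hBdef]
      field_simp
    have e2H : (2*H) ^ A = 2 ^ A * H ^ A := Real.mul_rpow (by norm_num) hH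
    have e22 : (2:ℝ) ^ B * 2 ^ A = 2 := by
      rw [← Real.rpow_add (by norm_num : (0:ℝ) < 2)]
      rw [add_comm B A, hAB, Real.rpow_one]
    have hHA : H ^ A ≤ (M + H) ^ A := Real.rpow_le_rpow hH (by linarith) hA0.le
    have h10 : |f x| ≤ C₁ * H ^ A * N ^ B := by
      rw [e4, eB, eA, eI, e2H] at h2
      calc |f x| ≤ 2 ^ B * (2 ^ A * H ^ A) * C₀ ^ q⁻¹ * N ^ B := h2
        _ = (2 ^ B * 2 ^ A) * C₀ ^ q⁻¹ * H ^ A * N ^ B := by ring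
        _ = C₁ * H ^ A * N ^ B := by rw [e22, hq_inv, hC₁def]
    have h8 : 0 ≤ N ^ B := Real.rpow_nonneg hN0 _
    have h9 : 0 ≤ (M + H) ^ A := Real.rpow_nonneg (by linarith) _
    have hC₁C : C₁ ≤ C := by
      rw [hCdef]
      have : 0 < K ^ B := Real.rpow_pos_of_pos hK0 _
      linarith
    calc |f x| ≤ C₁ * H ^ A * N ^ B := h10
      _ ≤ C₁ * (M + H) ^ A * N ^ B := by
          exact mul_le_mul_of_nonneg_right (mul_le_mul_of_nonneg_left hHA hC₁0.le) h8
      _ ≤ C * (M + H) ^ A * N ^ B := by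
          exact mul_le_mul_of_nonneg_right (mul_le_mul_of_nonneg_right hC₁C h9) h8
end

section
/- Let d ≥ 1 be an integer, θ ∈ (0,1), and p ≥ 1 a real number. Let Ω ⊆ ℝ^d be a nonempty bounded open set satisfying the interior measure density condition with constant C₀ > 0. Let f : ℝ^d → ℝ and H ≥ 0 satisfy |f(x) − f(y)| ≤ H·‖x − y‖^θ for all x, y in the closure of Ω. Then for every x in the closure of Ω and every r with 0 < r ≤ diam Ω, one has the pointwise bound |f(x)| ≤ H·r^θ + C₀^{1/p} · r^{−d/p} · ‖f‖_{L^p(Ω)}. -/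
open MeasureTheory Metric Set

/-- Pointwise bound (eq:pointwise) in the proof of Lemma `EHRLEM`:
`|f(x)| ≤ H r^θ + C₀^{1/p} r^{-d/p} ‖f‖_{L^p(Ω)}` for all `x ∈ closure Ω` and `0 < r ≤ diam Ω`. -/
theorem holder_interpolation_pointwise
    (d : ℕ) (hd : 1 ≤ d) (θ p C₀ : ℝ) (hθ : θ ∈ Set.Ioo (0 : ℝ) 1)
    (hp : 1 ≤ p) (hC₀ : 0 < C₀)
    (Ω : Set (EuclideanSpace ℝ (Fin d))) (hΩne : Ω.Nonempty) (hΩo : IsOpen Ω)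
    (hΩb : Bornology.IsBounded Ω)
    (hdens : ∀ x ∈ closure Ω, ∀ r : ℝ, 0 < r → r ≤ Metric.diam Ω →
      ENNReal.ofReal (r ^ d / C₀) ≤ volume (Metric.ball x r ∩ Ω))
    (f : EuclideanSpace ℝ (Fin d) → ℝ) (H : ℝ) (hH : 0 ≤ H)
    (hHol : ∀ x ∈ closure Ω, ∀ y ∈ closure Ω, |f x - f y| ≤ H * ‖x - y‖ ^ θ) :
    ∀ x ∈ closure Ω, ∀ r : ℝ, 0 < r → r ≤ Metric.diam Ω →
      |f x| ≤ H * r ^ θ +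
        C₀ ^ (1 / p) * r ^ (-(d : ℝ) / p) * (∫ y in Ω, |f y| ^ p) ^ (1 / p) := by
  intro x hx r hr hrd
  have hp0 : (0:ℝ) < p := lt_of_lt_of_le one_pos hp
  have hθ0 : (0:ℝ) ≤ θ := le_of_lt hθ.1
  -- continuity of f on the closure
  have hfc : ContinuousOn f (closure Ω) := by
    intro z hz
    apply Metric.continuousWithinAt_iff.2
    intro ε hε
    by_cases hH0 : H = 0
    · refine ⟨1, one_pos, fun {y} hy _ => ?_⟩
      have := hHol y hy z hz
      rw [hH0, zero_mul] at this
      have : |f y - f z| ≤ 0 := this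
      have : f y = f z := by
        have := abs_nonpos_iff.mp this
        linarith [sub_eq_zero.mp this]
      simpa [Real.dist_eq, this] using hε
    · have hHpos : 0 < H := lt_of_le_of_ne hH (Ne.symm hH0)
      refine ⟨(ε / H) ^ (1/θ), Real.rpow_pos_of_pos (div_pos hε hHpos) _, fun {y} hy hdy => ?_⟩
      have h1 : |f y - f z| ≤ H * ‖y - z‖ ^ θ := hHol y hy z hz
      have hnorm : ‖y - z‖ = dist y z := (dist_eq_norm y z).symm
      have h2 : ‖y - z‖ ^ θ < ((ε / H) ^ (1/θ)) ^ θ := by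
        rw [hnorm]
        exact Real.rpow_lt_rpow dist_nonneg hdy hθ.1
      have h3 : ((ε / H) ^ (1/θ)) ^ θ = ε / H := by
        rw [← Real.rpow_mul (le_of_lt (div_pos hε hHpos))]
        simp [one_div, inv_mul_cancel₀ (ne_of_gt hθ.1)]
      rw [Real.dist_eq]
      calc |f y - f z| ≤ H * ‖y - z‖ ^ θ := h1
        _ < H * (ε / H) := by
            rw [← h3]; exact (mul_lt_mul_iff_right₀ hHpos).2 h2
        _ = ε := by field_simp
  have hcomp : IsCompact (closure Ω) := hΩb.isCompact_closure
  -- integrand continuity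
  have hgc : ContinuousOn (fun y => |f y| ^ p) (closure Ω) := by
    apply ContinuousOn.rpow_const
    · exact continuous_abs.comp_continuousOn hfc
    · intro y _; right; linarith
  have hgint : IntegrableOn (fun y => |f y| ^ p) (closure Ω) volume :=
    hgc.integrableOn_compact hcomp
  set E : Set (EuclideanSpace ℝ (Fin d)) := Metric.ball x r ∩ Ω with hEdef
  have hEmeas : MeasurableSet E := measurableSet_ball.inter hΩo.measurableSet
  have hEcl : E ⊆ closure Ω := (inter_subset_right).trans subset_closure
  have hEfin : volume E < ⊤ :=
    lt_of_le_of_lt (measure_mono inter_subset_left) measure_ball_lt_top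
  have hdensE := hdens x hx r hr hrd
  have hrd0 : (0:ℝ) < r ^ d / C₀ := div_pos (pow_pos hr d) hC₀
  have hμE : r ^ d / C₀ ≤ (volume E).toReal := by
    have := ENNReal.toReal_mono (ne_of_lt hEfin) hdensE
    rwa [ENNReal.toReal_ofReal (le_of_lt hrd0)] at this
  have hμE0 : (0:ℝ) < (volume E).toReal := lt_of_lt_of_le hrd0 hμE
  set a : ℝ := max (|f x| - H * r ^ θ) 0 with ha
  have ha0 : 0 ≤ a := le_max_right _ _
  have hpt : ∀ y ∈ E, a ≤ |f y| := by
    intro y hy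
    have hy' : y ∈ closure Ω := hEcl hy
    have h1 : |f x - f y| ≤ H * ‖x - y‖ ^ θ := hHol x hx y hy'
    have h2 : ‖x - y‖ ^ θ ≤ r ^ θ := by
      apply Real.rpow_le_rpow (norm_nonneg _) _ hθ0
      rw [← dist_eq_norm]
      exact le_of_lt (by simpa [dist_comm] using hy.1)
    have h3 : |f x| - H * r ^ θ ≤ |f y| := by
      have := abs_sub_abs_le_abs_sub (f x) (f y)
      nlinarith [mul_le_mul_of_nonneg_left h2 hH]
    exact max_le h3 (abs_nonneg _)
  have hptp : ∀ y ∈ E, a ^ p ≤ |f y| ^ p := fun y hy =>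
    Real.rpow_le_rpow ha0 (hpt y hy) (le_of_lt hp0)
  have hconst : ∫ _ in E, a ^ p ∂volume = (volume E).toReal * a ^ p := by
    rw [setIntegral_const]; ring_nf; rw [measureReal_def]
  have hint1 : (volume E).toReal * a ^ p ≤ ∫ y in E, |f y| ^ p := by
    rw [← hconst]
    refine setIntegral_mono_on (integrableOn_const hEfin.ne)
      (hgint.mono_set hEcl) hEmeas hptp
  have hnn : 0 ≤ᵐ[volume.restrict Ω] fun y => |f y| ^ p := by
    filter_upwards with y
    exact Real.rpow_nonneg (abs_nonneg _) _
  have hint2 : (∫ y in E, |f y| ^ p) ≤ ∫ y in Ω, |f y| ^ p := by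
    apply setIntegral_mono_set (hgint.mono_set subset_closure) hnn
    exact HasSubset.Subset.eventuallyLE inter_subset_right
  set I : ℝ := ∫ y in Ω, |f y| ^ p with hI
  have hI0 : 0 ≤ I := setIntegral_nonneg hΩo.measurableSet
    (fun y _ => Real.rpow_nonneg (abs_nonneg _) _)
  have key : a ^ p * (r ^ d / C₀) ≤ I := by
    calc a ^ p * (r ^ d / C₀) ≤ a ^ p * (volume E).toReal :=
          mul_le_mul_of_nonneg_left hμE (Real.rpow_nonneg ha0 _)
      _ = (volume E).toReal * a ^ p := by ring
      _ ≤ ∫ y in E, |f y| ^ p := hint1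
      _ ≤ I := hint2
  have hap : a ^ p ≤ I * C₀ / r ^ d := by
    rw [le_div_iff₀ (pow_pos hr d)]
    calc a ^ p * r ^ d = a ^ p * (r ^ d / C₀) * C₀ := by field_simp
      _ ≤ I * C₀ := mul_le_mul_of_nonneg_right key (le_of_lt hC₀)
  have habound : a ≤ (I * C₀ / r ^ d) ^ (1/p) := by
    have h1 : a = (a ^ p) ^ (1/p) := by
      rw [one_div, Real.rpow_rpow_inv ha0 (ne_of_gt hp0)]
    rw [h1]
    exact Real.rpow_le_rpow (Real.rpow_nonneg ha0 _) hap
      (le_of_lt (one_div_pos.2 hp0))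
  have hrhs : (I * C₀ / r ^ d) ^ (1/p)
      = C₀ ^ (1/p) * r ^ (-(d:ℝ)/p) * I ^ (1/p) := by
    have hrpow : (r:ℝ) ^ d = r ^ (d:ℝ) := (Real.rpow_natCast r d).symm
    have : I * C₀ / r ^ d = C₀ * r ^ (-(d:ℝ)) * I := by
      rw [hrpow, Real.rpow_neg (le_of_lt hr)]
      field_simp
    rw [this, Real.mul_rpow (mul_nonneg (le_of_lt hC₀)
        (Real.rpow_nonneg (le_of_lt hr) _)) hI0,
      Real.mul_rpow (le_of_lt hC₀) (Real.rpow_nonneg (le_of_lt hr) _),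
      ← Real.rpow_mul (le_of_lt hr)]
    ring_nf
  have hfinal : a ≤ C₀ ^ (1/p) * r ^ (-(d:ℝ)/p) * I ^ (1/p) := by
    rw [← hrhs]; exact habound
  have : |f x| - H * r ^ θ ≤ a := le_max_left _ _
  linarith
end

section
/- Let d ≥ 1 be an integer, θ ∈ (0,1), and p ≥ 1 a real number. Let Ω ⊆ ℝ^d be a nonempty bounded open set satisfying the interior measure density condition with constant C₀ > 0. Then there exists C > 0 depending only on d, θ, p and C₀ with the following property: whenever f : ℝ^d → ℝ and H > 0 satisfy |f(x) − f(y)| ≤ H·‖x − y‖^θ for all x, y in the closure of Ω, and in addition d·C₀^{1/p}·‖f‖_{L^p(Ω)} ≤ p·θ·H·(diam Ω)^{(pθ+d)/p} (i.e. the optimal radius r_* := (d·C₀^{1/p}·‖f‖_{L^p(Ω)} / (p·θ·H))^{p/(pθ+d)} satisfies r_* ≤ diam Ω), then sup_{x ∈ closure Ω} |f(x)| ≤ C · H^{d/(pθ+d)} · ‖f‖_{L^p(Ω)}^{pθ/(pθ+d)}. -/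
set_option maxHeartbeats 1000000

open MeasureTheory Metric Set

private lemma log_eq_imp_eq' {x y : ℝ} (hx : 0 < x) (hy : 0 < y)
    (h : Real.log x = Real.log y) : x = y := by
  rw [← Real.exp_log hx, ← Real.exp_log hy, h]

private lemma rpow_add_le_two_rpow_mul {a b q : ℝ} (ha : 0 ≤ a) (hb : 0 ≤ b)
    (hq : 0 ≤ q) : (a + b) ^ q ≤ 2 ^ q * (a ^ q + b ^ q) := by
  have h1 : a + b ≤ 2 * max a b := by
    rcases max_cases a b with ⟨h, h'⟩ | ⟨h, h'⟩ <;> rw [h] <;> linarith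
  have h2 : (a + b) ^ q ≤ (2 * max a b) ^ q :=
    Real.rpow_le_rpow (by linarith) h1 hq
  have h3 : (2 * max a b) ^ q = 2 ^ q * (max a b) ^ q :=
    Real.mul_rpow (by norm_num) (le_max_of_le_left ha)
  have h4 : (max a b) ^ q ≤ a ^ q + b ^ q := by
    rcases max_cases a b with ⟨h, _⟩ | ⟨h, _⟩ <;> rw [h]
    · have := Real.rpow_nonneg hb q; linarith
    · have := Real.rpow_nonneg ha q; linarith
  have h5 : (0:ℝ) ≤ 2 ^ q := Real.rpow_nonneg (by norm_num) q
  calc (a + b) ^ q ≤ 2 ^ q * (max a b) ^ q := h3 ▸ h2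
    _ ≤ 2 ^ q * (a ^ q + b ^ q) := mul_le_mul_of_nonneg_left h4 h5

private lemma add_rpow_le' {a b q : ℝ} (ha : 0 ≤ a) (hb : 0 ≤ b) (hq0 : 0 ≤ q)
    (hq1 : q ≤ 1) : (a + b) ^ q ≤ a ^ q + b ^ q := by
  have h := NNReal.rpow_add_le_add_rpow a.toNNReal b.toNNReal hq0 hq1
  have h' := NNReal.coe_le_coe.2 h
  push_cast at h'
  rwa [Real.coe_toNNReal a ha, Real.coe_toNNReal b hb] at h'

/-- Case 1 of the proof of Lemma `EHRLEM`: when the optimal radius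
`r_* = (d C₀^{1/p} ‖f‖_p / (pθH))^{p/(pθ+d)}` satisfies `r_* ≤ diam Ω`, one has the
multiplicative interpolation bound `‖f‖_∞ ≤ C H^{d/(pθ+d)} ‖f‖_p^{pθ/(pθ+d)}`,
with `C` depending only on `d, θ, p, C₀`. -/
theorem holder_interpolation_case_one
    (d : ℕ) (hd : 1 ≤ d) (θ p C₀ : ℝ) (hθ : θ ∈ Set.Ioo (0 : ℝ) 1)
    (hp : 1 ≤ p) (hC₀ : 0 < C₀) :
    ∃ C : ℝ, 0 < C ∧
      ∀ (Ω : Set (EuclideanSpace ℝ (Fin d))), Ω.Nonempty → IsOpen Ω →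
        Bornology.IsBounded Ω →
        (∀ x ∈ closure Ω, ∀ r : ℝ, 0 < r → r ≤ Metric.diam Ω →
          ENNReal.ofReal (r ^ d / C₀) ≤ volume (Metric.ball x r ∩ Ω)) →
        ∀ (f : EuclideanSpace ℝ (Fin d) → ℝ) (H : ℝ), 0 < H →
          (∀ x ∈ closure Ω, ∀ y ∈ closure Ω, |f x - f y| ≤ H * ‖x - y‖ ^ θ) →
          (d : ℝ) * C₀ ^ (1 / p) * (∫ y in Ω, |f y| ^ p) ^ (1 / p) ≤
            p * θ * H * Metric.diam Ω ^ ((p * θ + d) / p) →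
          ∀ x ∈ closure Ω,
            |f x| ≤ C * H ^ ((d : ℝ) / (p * θ + d)) *
              ((∫ y in Ω, |f y| ^ p) ^ (1 / p)) ^ (p * θ / (p * θ + d)) := by
  obtain ⟨hθ0, hθ1⟩ := hθ
  have hp0 : (0:ℝ) < p := lt_of_lt_of_le one_pos hp
  have hd0 : (0:ℝ) < (d:ℝ) := by exact_mod_cast hd
  have hpθ : 0 < p * θ := mul_pos hp0 hθ0
  have hden : 0 < p * θ + d := by positivity
  set β : ℝ := p * θ / (p * θ + d) with hβdef
  have hβ0 : 0 < β := div_pos hpθ hden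
  have hβ1 : β < 1 := (div_lt_one hden).2 (by linarith)
  have h1β : (d : ℝ) / (p * θ + d) = 1 - β := by
    rw [hβdef]; field_simp; ring
  refine ⟨2 * (((d:ℝ) / (p * θ)) ^ (β - 1) + ((d:ℝ) / (p * θ)) ^ β) * C₀ ^ (β / p),
    by positivity, ?_⟩
  intro Ω hΩne hΩopen hΩbd hmd f H hH hHol hsmall
  set I := ∫ y in Ω, |f y| ^ p with hIdef
  have hI0 : 0 ≤ I :=
    setIntegral_nonneg hΩopen.measurableSet fun y _ => Real.rpow_nonneg (abs_nonneg _) p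
  set N := I ^ (1 / p) with hNdef
  have hN0 : 0 ≤ N := Real.rpow_nonneg hI0 _
  -- continuity of f on the closure
  have hcont : ContinuousOn f (closure Ω) := by
    intro x₀ hx₀
    rw [Metric.continuousWithinAt_iff]
    intro ε hε
    refine ⟨(ε / (2 * H)) ^ (1 / θ), by positivity, fun y hy hdy => ?_⟩
    have h2 := hHol y hy x₀ hx₀
    have h3 : ‖y - x₀‖ ^ θ ≤ ((ε / (2 * H)) ^ (1 / θ)) ^ θ := by
      apply Real.rpow_le_rpow (norm_nonneg _) _ hθ0.le
      rw [← dist_eq_norm]; exact hdy.le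
    rw [← Real.rpow_mul (by positivity), one_div_mul_cancel hθ0.ne', Real.rpow_one] at h3
    have h4 : H * ‖y - x₀‖ ^ θ ≤ H * (ε / (2 * H)) := mul_le_mul_of_nonneg_left h3 hH.le
    have h5 : H * (ε / (2 * H)) = ε / 2 := by field_simp
    calc dist (f y) (f x₀) = |f y - f x₀| := Real.dist_eq _ _
      _ ≤ H * ‖y - x₀‖ ^ θ := h2
      _ ≤ ε / 2 := by rw [← h5]; exact h4
      _ < ε := by linarith
  have hK : IsCompact (closure Ω) := hΩbd.isCompact_closure
  have hgc : ContinuousOn (fun y => |f y| ^ p) (closure Ω) :=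
    (hcont.abs).rpow_const fun y _ => Or.inr hp0.le
  have hfi : IntegrableOn (fun y => |f y| ^ p) (closure Ω) := hgc.integrableOn_compact hK
  have hfiΩ : IntegrableOn (fun y => |f y| ^ p) Ω := hfi.mono_set subset_closure
  intro x hx
  -- key radius bound
  have key : ∀ r : ℝ, 0 < r → r ≤ Metric.diam Ω →
      |f x| ≤ 2 * (C₀ ^ (1 / p) * N) * r ^ (-(d:ℝ) / p) + 2 * (H * r ^ θ) := by
    intro r hr0 hrdle
    set S := Metric.ball x r ∩ Ω with hSdef
    have hSm : MeasurableSet S := measurableSet_ball.inter hΩopen.measurableSet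
    have hSsub : S ⊆ closure Ω := fun y hy => subset_closure hy.2
    have hμlb := hmd x hx r hr0 hrdle
    have hrdC : 0 < r ^ d / C₀ := by positivity
    have hμpos : 0 < volume S := lt_of_lt_of_le (ENNReal.ofReal_pos.2 hrdC) hμlb
    have hμfin : volume S < ⊤ :=
      lt_of_le_of_lt (measure_mono inter_subset_left) measure_ball_lt_top
    set V := (volume S).toReal with hVdef
    have hV0 : 0 < V := ENNReal.toReal_pos hμpos.ne' hμfin.ne
    have hVlb : r ^ d / C₀ ≤ V := by
      have h := ENNReal.toReal_mono hμfin.ne hμlb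
      rwa [ENNReal.toReal_ofReal hrdC.le] at h
    have hpt : ∀ y ∈ S, |f x| ^ p ≤ 2 ^ p * (|f y| ^ p + (H * r ^ θ) ^ p) := by
      intro y hy
      have hyc : y ∈ closure Ω := subset_closure hy.2
      have h1 : |f x| ≤ |f y| + H * r ^ θ := by
        have h2 := hHol x hx y hyc
        have h3 : ‖x - y‖ ^ θ ≤ r ^ θ := by
          apply Real.rpow_le_rpow (norm_nonneg _) _ hθ0.le
          have hb : dist y x < r := Metric.mem_ball.1 hy.1
          rw [← dist_eq_norm, dist_comm]; exact hb.le
        have h4 : |f x| - |f y| ≤ |f x - f y| := abs_sub_abs_le_abs_sub _ _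
        have h5 : H * ‖x - y‖ ^ θ ≤ H * r ^ θ := mul_le_mul_of_nonneg_left h3 hH.le
        linarith
      calc |f x| ^ p ≤ (|f y| + H * r ^ θ) ^ p :=
            Real.rpow_le_rpow (abs_nonneg _) h1 hp0.le
        _ ≤ 2 ^ p * (|f y| ^ p + (H * r ^ θ) ^ p) :=
            rpow_add_le_two_rpow_mul (abs_nonneg _) (by positivity) hp0.le
    have hfiS : IntegrableOn (fun y => |f y| ^ p) S := hfi.mono_set hSsub
    have hintS : ∫ y in S, |f y| ^ p ≤ I := by
      apply setIntegral_mono_set hfiΩ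
      · exact Filter.Eventually.of_forall fun y => Real.rpow_nonneg (abs_nonneg _) p
      · exact (Set.inter_subset_right).eventuallyLE
    have h2p : (0:ℝ) ≤ 2 ^ p := Real.rpow_nonneg (by norm_num) p
    have hstep : |f x| ^ p * V ≤ 2 ^ p * (I + (H * r ^ θ) ^ p * V) := by
      have e1 : ∫ _ in S, |f x| ^ p = |f x| ^ p * V := by
        rw [setIntegral_const, smul_eq_mul, mul_comm, measureReal_def]
      have e2 : ∫ y in S, 2 ^ p * (|f y| ^ p + (H * r ^ θ) ^ p) =
          2 ^ p * ((∫ y in S, |f y| ^ p) + (H * r ^ θ) ^ p * V) := by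
        rw [integral_const_mul, integral_add hfiS (integrableOn_const hμfin.ne),
          setIntegral_const, smul_eq_mul, measureReal_def, ← hVdef]
        ring
      have e3 : ∫ _ in S, |f x| ^ p ≤ ∫ y in S, 2 ^ p * (|f y| ^ p + (H * r ^ θ) ^ p) :=
        setIntegral_mono_on (integrableOn_const hμfin.ne)
          ((hfiS.add (integrableOn_const hμfin.ne)).const_mul _) hSm hpt
      rw [e1, e2] at e3
      nlinarith [hintS, h2p]
    have hdiv : |f x| ^ p ≤ 2 ^ p * (C₀ * I * r ^ (-(d:ℝ)) + (H * r ^ θ) ^ p) := by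
      have h1 : |f x| ^ p ≤ 2 ^ p * (I + (H * r ^ θ) ^ p * V) / V := (le_div_iff₀ hV0).2 hstep
      have h2 : 2 ^ p * (I + (H * r ^ θ) ^ p * V) / V = 2 ^ p * (I / V + (H * r ^ θ) ^ p) := by
        field_simp
      have h3 : I / V ≤ C₀ * I * r ^ (-(d:ℝ)) := by
        have h4 : I / V ≤ I / (r ^ d / C₀) := by gcongr
        have h5 : I / (r ^ d / C₀) = C₀ * I * r ^ (-(d:ℝ)) := by
          rw [Real.rpow_neg hr0.le, Real.rpow_natCast]
          field_simp
        linarith [h5 ▸ h4]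
      rw [h2] at h1
      nlinarith [h2p]
    have hroot : |f x| ≤ 2 * ((C₀ * I * r ^ (-(d:ℝ))) ^ (1 / p) + H * r ^ θ) := by
      have hCIr : 0 ≤ C₀ * I * r ^ (-(d:ℝ)) :=
        mul_nonneg (mul_nonneg hC₀.le hI0) (Real.rpow_nonneg hr0.le _)
      have h1 : (|f x| ^ p) ^ (1 / p) ≤
          (2 ^ p * (C₀ * I * r ^ (-(d:ℝ)) + (H * r ^ θ) ^ p)) ^ (1 / p) :=
        Real.rpow_le_rpow (Real.rpow_nonneg (abs_nonneg _) p) hdiv (by positivity)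
      rw [← Real.rpow_mul (abs_nonneg _), mul_one_div, div_self hp0.ne', Real.rpow_one] at h1
      have h2 : (2 ^ p * (C₀ * I * r ^ (-(d:ℝ)) + (H * r ^ θ) ^ p)) ^ (1 / p) =
          2 * (C₀ * I * r ^ (-(d:ℝ)) + (H * r ^ θ) ^ p) ^ (1 / p) := by
        rw [Real.mul_rpow h2p (by positivity), ← Real.rpow_mul (by norm_num : (0:ℝ) ≤ 2),
          mul_one_div, div_self hp0.ne', Real.rpow_one]
      have h3 : (C₀ * I * r ^ (-(d:ℝ)) + (H * r ^ θ) ^ p) ^ (1 / p) ≤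
          (C₀ * I * r ^ (-(d:ℝ))) ^ (1 / p) + ((H * r ^ θ) ^ p) ^ (1 / p) :=
        add_rpow_le' hCIr (by positivity) (by positivity) (by rw [div_le_one hp0]; exact hp)
      have h4 : ((H * r ^ θ) ^ p) ^ (1 / p) = H * r ^ θ := by
        rw [← Real.rpow_mul (by positivity), mul_one_div, div_self hp0.ne', Real.rpow_one]
      rw [h2] at h1
      rw [h4] at h3
      nlinarith
    have hsplit : (C₀ * I * r ^ (-(d:ℝ))) ^ (1 / p) = C₀ ^ (1 / p) * N * r ^ (-(d:ℝ) / p) := by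
      rw [Real.mul_rpow (mul_nonneg hC₀.le hI0) (Real.rpow_nonneg hr0.le _),
        Real.mul_rpow hC₀.le hI0, ← Real.rpow_mul hr0.le, mul_one_div, ← hNdef]
    rw [hsplit] at hroot
    linarith
  by_cases hNz : N = 0
  · rw [hNz, Real.zero_rpow hβ0.ne', mul_zero]
    by_contra hcon
    push_neg at hcon
    obtain ⟨z, hz⟩ := hΩne
    obtain ⟨ε, hε0, hball⟩ := Metric.isOpen_iff.1 hΩopen z hz
    have hdiam0 : 0 < Metric.diam Ω := by
      set w := z + (ε / 2) • (EuclideanSpace.single (⟨0, hd⟩ : Fin d) (1:ℝ)) with hwdef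
      have hwz : dist w z = ε / 2 := by
        rw [dist_eq_norm, hwdef, add_sub_cancel_left, norm_smul,
          EuclideanSpace.norm_single, norm_one, mul_one, Real.norm_eq_abs,
          abs_of_pos (by positivity : (0:ℝ) < ε / 2)]
      have hw : w ∈ Ω := hball (by rw [Metric.mem_ball, hwz]; linarith)
      calc (0:ℝ) < ε / 2 := by positivity
        _ = dist w z := hwz.symm
        _ ≤ Metric.diam Ω := Metric.dist_le_diam_of_mem hΩbd hw hz
    set r0 := min (Metric.diam Ω) ((|f x| / (4 * H)) ^ (1 / θ)) with hr0def
    have hr0pos : 0 < r0 :=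
      lt_min hdiam0 (Real.rpow_pos_of_pos (by positivity) _)
    have hkey := key r0 hr0pos (min_le_left _ _)
    rw [hNz] at hkey
    have hsmall2 : H * r0 ^ θ ≤ |f x| / 4 := by
      have h1 : r0 ^ θ ≤ ((|f x| / (4 * H)) ^ (1 / θ)) ^ θ :=
        Real.rpow_le_rpow hr0pos.le (min_le_right _ _) hθ0.le
      rw [← Real.rpow_mul (by positivity), one_div_mul_cancel hθ0.ne', Real.rpow_one] at h1
      have h2 : H * r0 ^ θ ≤ H * (|f x| / (4 * H)) := mul_le_mul_of_nonneg_left h1 hH.le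
      have h3 : H * (|f x| / (4 * H)) = |f x| / 4 := by field_simp
      linarith [h3 ▸ h2]
    nlinarith [hkey, hsmall2, hcon]
  · have hNpos : 0 < N := lt_of_le_of_ne hN0 (Ne.symm hNz)
    set A := C₀ ^ (1 / p) * N with hAdef
    have hApos : 0 < A := mul_pos (Real.rpow_pos_of_pos hC₀ _) hNpos
    set t := (d : ℝ) * A / (p * θ * H) with htdef
    have htpos : 0 < t := div_pos (mul_pos hd0 hApos) (mul_pos hpθ hH)
    set r := t ^ (p / (p * θ + d)) with hrdef
    have hrpos : 0 < r := Real.rpow_pos_of_pos htpos _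
    have hrle : r ≤ Metric.diam Ω := by
      have h1 : t ≤ Metric.diam Ω ^ ((p * θ + d) / p) := by
        rw [htdef, div_le_iff₀ (mul_pos hpθ hH)]
        calc (d : ℝ) * A = (d : ℝ) * C₀ ^ (1 / p) * N := by rw [hAdef]; ring
          _ ≤ p * θ * H * Metric.diam Ω ^ ((p * θ + d) / p) := hsmall
          _ = Metric.diam Ω ^ ((p * θ + d) / p) * (p * θ * H) := by ring
      have h2 : r ≤ (Metric.diam Ω ^ ((p * θ + d) / p)) ^ (p / (p * θ + d)) :=
        Real.rpow_le_rpow htpos.le h1 (by positivity)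
      rw [← Real.rpow_mul Metric.diam_nonneg] at h2
      have h3 : (p * θ + d) / p * (p / (p * θ + d)) = 1 := by
        field_simp
      rwa [h3, Real.rpow_one] at h2
    have hkey := key r hrpos hrle
    have hrθ : r ^ θ = t ^ β := by
      rw [hrdef, ← Real.rpow_mul htpos.le]
      congr 1
      rw [hβdef]; ring
    have hrd' : r ^ (-(d:ℝ) / p) = t ^ (β - 1) := by
      rw [hrdef, ← Real.rpow_mul htpos.le]
      congr 1
      rw [hβdef]; field_simp; ring
    have htfact : t = ((d : ℝ) / (p * θ)) * C₀ ^ (1 / p) * H⁻¹ * N := by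
      rw [htdef, hAdef]; field_simp
    have hE : ∀ γ : ℝ, t ^ γ = ((d : ℝ) / (p * θ)) ^ γ * C₀ ^ (γ / p) * H ^ (-γ) * N ^ γ := by
      intro γ
      rw [htfact,
        Real.mul_rpow (by positivity) hNpos.le,
        Real.mul_rpow (by positivity) (inv_nonneg.2 hH.le),
        Real.mul_rpow (by positivity) (Real.rpow_nonneg hC₀.le _),
        Real.inv_rpow hH.le, ← Real.rpow_neg hH.le,
        ← Real.rpow_mul hC₀.le, one_div_mul_eq_div]
    have hT2 : H * t ^ β = ((d : ℝ) / (p * θ)) ^ β * C₀ ^ (β / p) * H ^ (1 - β) * N ^ β := by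
      rw [hE β, show (1 : ℝ) - β = 1 + -β by ring, Real.rpow_add hH, Real.rpow_one]
      ring
    have hT1 : A * t ^ (β - 1) =
        ((d : ℝ) / (p * θ)) ^ (β - 1) * C₀ ^ (β / p) * H ^ (1 - β) * N ^ β := by
      rw [hE (β - 1), hAdef]
      have e1 : C₀ ^ (β / p) = C₀ ^ (1 / p) * C₀ ^ ((β - 1) / p) := by
        rw [← Real.rpow_add hC₀]; congr 1; ring
      have e2 : N * N ^ (β - 1) = N ^ β := by
        nth_rw 1 [← Real.rpow_one N]
        rw [← Real.rpow_add hNpos]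
        ring_nf
      have e3 : H ^ (-(β - 1)) = H ^ (1 - β) := by congr 1; ring
      rw [e1, ← e2, e3]; ring
    rw [h1β]
    calc |f x| ≤ 2 * A * t ^ (β - 1) + 2 * (H * t ^ β) := by
          rw [← hrθ, ← hrd']; exact hkey
      _ = 2 * (((d:ℝ) / (p * θ)) ^ (β - 1) + ((d:ℝ) / (p * θ)) ^ β) * C₀ ^ (β / p) *
          H ^ (1 - β) * N ^ β := by
          linear_combination 2 * hT1 + 2 * hT2
end

section
/- Let d ≥ 1 be an integer, θ ∈ (0,1), and p ≥ 1 a real number. Let Ω ⊆ ℝ^d be a nonempty bounded open set satisfying the interior measure density condition with constant C₀ > 0. Let f : ℝ^d → ℝ and H ≥ 0 satisfy |f(x) − f(y)| ≤ H·‖x − y‖^θ for all x, y in the closure of Ω. If p·θ·H·(diam Ω)^{(pθ+d)/p} < d·C₀^{1/p}·‖f‖_{L^p(Ω)}, then sup_{x ∈ closure Ω} |f(x)| ≤ ( d/(pθ) + 1 ) · C₀^{1/p} · (diam Ω)^{−d/p} · ‖f‖_{L^p(Ω)}. -/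
open MeasureTheory Metric Set

/-- Case 2 of the proof of Lemma `EHRLEM`: when the optimal radius exceeds `diam Ω`,
i.e. `pθH (diam Ω)^{(pθ+d)/p} < d C₀^{1/p} ‖f‖_p`, one has
`‖f‖_∞ ≤ (d/(pθ) + 1) C₀^{1/p} (diam Ω)^{-d/p} ‖f‖_p`. -/
theorem holder_interpolation_case_two
    (d : ℕ) (hd : 1 ≤ d) (θ p C₀ : ℝ) (hθ : θ ∈ Set.Ioo (0 : ℝ) 1)
    (hp : 1 ≤ p) (hC₀ : 0 < C₀)
    (Ω : Set (EuclideanSpace ℝ (Fin d))) (hΩne : Ω.Nonempty) (hΩo : IsOpen Ω)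
    (hΩb : Bornology.IsBounded Ω)
    (hdens : ∀ x ∈ closure Ω, ∀ r : ℝ, 0 < r → r ≤ Metric.diam Ω →
      ENNReal.ofReal (r ^ d / C₀) ≤ volume (Metric.ball x r ∩ Ω))
    (f : EuclideanSpace ℝ (Fin d) → ℝ) (H : ℝ) (hH : 0 ≤ H)
    (hHol : ∀ x ∈ closure Ω, ∀ y ∈ closure Ω, |f x - f y| ≤ H * ‖x - y‖ ^ θ)
    (hcase : p * θ * H * Metric.diam Ω ^ ((p * θ + d) / p) <
      (d : ℝ) * C₀ ^ (1 / p) * (∫ y in Ω, |f y| ^ p) ^ (1 / p)) :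
    ∀ x ∈ closure Ω,
      |f x| ≤ ((d : ℝ) / (p * θ) + 1) * C₀ ^ (1 / p) *
        Metric.diam Ω ^ (-(d : ℝ) / p) * (∫ y in Ω, |f y| ^ p) ^ (1 / p) := by
  intro x hx
  have hθ0 : (0:ℝ) < θ := hθ.1
  have hp0 : (0:ℝ) < p := lt_of_lt_of_le one_pos hp
  have hpθ : (0:ℝ) < p * θ := mul_pos hp0 hθ0
  have hd0 : 0 < d := hd
  -- positivity of the diameter
  obtain ⟨z, hz⟩ := hΩne
  obtain ⟨ε, hε, hballz⟩ := Metric.isOpen_iff.1 hΩo z hz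
  set D := Metric.diam Ω with hDdef
  have hyΩ : z + (ε/2) • EuclideanSpace.single (⟨0, hd0⟩ : Fin d) (1:ℝ) ∈ Ω := by
    apply hballz
    rw [Metric.mem_ball, dist_comm, dist_self_add_right, norm_smul,
      EuclideanSpace.norm_single]
    simp [abs_of_pos, hε]
  have hD : 0 < D := by
    have h1 := Metric.dist_le_diam_of_mem hΩb hz hyΩ
    rw [dist_self_add_right, norm_smul, EuclideanSpace.norm_single] at h1
    have : |ε/2| = ε/2 := abs_of_pos (by linarith)
    simp only [norm_one, mul_one, Real.norm_eq_abs, this] at h1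
    linarith
  set I := ∫ y in Ω, |f y| ^ p with hIdef
  have hI0 : (0:ℝ) ≤ I :=
    setIntegral_nonneg hΩo.measurableSet (fun y _ => Real.rpow_nonneg (abs_nonneg _) p)
  set N := I ^ (1/p) with hNdef
  have hN0 : (0:ℝ) ≤ N := Real.rpow_nonneg hI0 _
  have hC₀p : (0:ℝ) < C₀ ^ (1/p) := Real.rpow_pos_of_pos hC₀ _
  -- RHS of `hcase` is positive, hence N > 0, hence I > 0
  have hNpos : 0 < N := by
    have hL : 0 ≤ p * θ * H * D ^ ((p * θ + d) / p) := by
      have := Real.rpow_nonneg hD.le ((p * θ + d) / p)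
      positivity
    have hR : 0 < (d:ℝ) * C₀ ^ (1/p) * N := lt_of_le_of_lt hL hcase
    have hdc : (0:ℝ) < (d:ℝ) * C₀ ^ (1/p) := mul_pos ((Nat.cast_pos (α := ℝ)).2 hd0) hC₀p
    by_contra h
    push_neg at h
    have := mul_nonpos_of_nonneg_of_nonpos hdc.le h
    linarith
  -- continuity of f on the closure
  have hfc : ContinuousOn f (closure Ω) := by
    rw [Metric.continuousOn_iff]
    intro b hb ε' hε'
    have hH1 : (0:ℝ) < H + 1 := by linarith
    have hq : (0:ℝ) < ε' / (H + 1) := div_pos hε' hH1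
    refine ⟨(ε' / (H + 1)) ^ (1/θ), Real.rpow_pos_of_pos hq _, fun a ha hab => ?_⟩
    have h1 : |f a - f b| ≤ H * ‖a - b‖ ^ θ := hHol a ha b hb
    have h2 : ‖a - b‖ ^ θ < ε' / (H + 1) := by
      have := Real.rpow_lt_rpow dist_nonneg hab hθ0
      rwa [← Real.rpow_mul hq.le, one_div_mul_cancel hθ0.ne', Real.rpow_one,
        dist_eq_norm] at this
    have h3 : H * ‖a - b‖ ^ θ ≤ H * (ε' / (H + 1)) :=
      mul_le_mul_of_nonneg_left h2.le hH
    have h4 : H * (ε' / (H + 1)) < ε' := by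
      calc H * (ε' / (H + 1)) < (H + 1) * (ε' / (H + 1)) := by
            exact mul_lt_mul_of_pos_right (by linarith) hq
        _ = ε' := by field_simp
    rw [Real.dist_eq]
    linarith
  have hcomp : IsCompact (closure Ω) := hΩb.isCompact_closure
  have hgc : ContinuousOn (fun y => |f y| ^ p) (closure Ω) :=
    (hfc.abs).rpow_const (fun y _ => Or.inr hp0.le)
  have hIcl : IntegrableOn (fun y => |f y| ^ p) (closure Ω) :=
    hgc.integrableOn_compact hcomp
  have hIΩ : IntegrableOn (fun y => |f y| ^ p) Ω := hIcl.mono_set subset_closure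
  -- the key pointwise bound
  set M := C₀ ^ (1/p) * D ^ (-(d:ℝ)/p) * N with hMdef
  have hDdp : (0:ℝ) < D ^ ((d:ℝ)/p) := Real.rpow_pos_of_pos hD _
  have hneg : D ^ (-(d:ℝ)/p) = (D ^ ((d:ℝ)/p))⁻¹ := by
    rw [neg_div, Real.rpow_neg hD.le]
  have hM0 : 0 < M := by
    rw [hMdef, hneg]
    positivity
  have claim : |f x| ≤ H * D ^ θ + M := by
    rcases le_or_gt (|f x|) (H * D ^ θ) with hcase1 | hcase2
    · linarith
    · set a := |f x| - H * D ^ θ with hadef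
      have ha : 0 < a := by simp only [hadef]; linarith
      suffices hsuff : a ≤ M by linarith
      set S := Metric.ball x D ∩ Ω with hSdef
      have hμ : ENNReal.ofReal (D ^ d / C₀) ≤ volume S := hdens x hx D hD le_rfl
      have hμfin : volume S < ⊤ :=
        lt_of_le_of_lt (measure_mono inter_subset_left) measure_ball_lt_top
      have hμreal : D ^ d / C₀ ≤ (volume S).toReal := by
        have := ENNReal.toReal_mono hμfin.ne hμ
        rwa [ENNReal.toReal_ofReal (by positivity)] at this
      have hmeasS : MeasurableSet S := measurableSet_ball.inter hΩo.measurableSet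
      have hIS : IntegrableOn (fun y => |f y| ^ p) S := hIΩ.mono_set inter_subset_right
      have hpt : ∀ y ∈ S, a ^ p ≤ |f y| ^ p := by
        intro y hy
        have hyc : y ∈ closure Ω := subset_closure hy.2
        have h1 : |f x - f y| ≤ H * ‖x - y‖ ^ θ := hHol x hx y hyc
        have h2 : ‖x - y‖ ^ θ ≤ D ^ θ := by
          apply Real.rpow_le_rpow (norm_nonneg _) _ hθ0.le
          have := hy.1
          rw [Metric.mem_ball, dist_comm] at this
          rw [← dist_eq_norm]
          exact this.le
        have h3 : H * ‖x - y‖ ^ θ ≤ H * D ^ θ := mul_le_mul_of_nonneg_left h2 hH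
        have h4 : a ≤ |f y| := by
          have h5 := abs_sub_abs_le_abs_sub (f x) (f y)
          simp only [hadef]
          linarith
        exact Real.rpow_le_rpow ha.le h4 hp0.le
      have step1 : a ^ p * (volume S).toReal ≤ ∫ y in S, |f y| ^ p := by
        have hc : ∫ (_ : EuclideanSpace ℝ (Fin d)) in S, a ^ p =
            (volume S).toReal • (a ^ p) := setIntegral_const _
        calc a ^ p * (volume S).toReal
            = ∫ (_ : EuclideanSpace ℝ (Fin d)) in S, a ^ p := by
              rw [hc, smul_eq_mul]; ring
          _ ≤ ∫ y in S, |f y| ^ p :=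
              setIntegral_mono_on (integrableOn_const hμfin.ne) hIS hmeasS hpt
      have step2 : ∫ y in S, |f y| ^ p ≤ I := by
        apply setIntegral_mono_set hIΩ
        · exact Filter.Eventually.of_forall (fun y => Real.rpow_nonneg (abs_nonneg _) p)
        · exact HasSubset.Subset.eventuallyLE inter_subset_right
      have key : a ^ p * (D ^ d / C₀) ≤ I := by
        calc a ^ p * (D ^ d / C₀) ≤ a ^ p * (volume S).toReal :=
              mul_le_mul_of_nonneg_left hμreal (Real.rpow_nonneg ha.le p)
          _ ≤ ∫ y in S, |f y| ^ p := step1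
          _ ≤ I := step2
      have hDd : (0:ℝ) < D ^ d := pow_pos hD d
      have h3 : a ^ p ≤ I * C₀ / D ^ d := by
        rw [le_div_iff₀ hDd]
        calc a ^ p * D ^ d = (a ^ p * (D ^ d / C₀)) * C₀ := by field_simp
          _ ≤ I * C₀ := mul_le_mul_of_nonneg_right key hC₀.le
      have h5 : a ≤ (I * C₀ / D ^ d) ^ (1/p) := by
        have h6 := Real.rpow_le_rpow (Real.rpow_nonneg ha.le p) h3
          (one_div_nonneg.2 hp0.le)
        rwa [← Real.rpow_mul ha.le, mul_one_div_cancel hp0.ne', Real.rpow_one] at h6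
      have hMeq : (I * C₀ / D ^ d) ^ (1/p) = M := by
        have hrw : I * C₀ / D ^ d = C₀ * (D ^ (-(d:ℝ)/p * p)) * I := by
          rw [show (-(d:ℝ)/p * p) = -(d:ℝ) by field_simp,
            Real.rpow_neg hD.le, Real.rpow_natCast]
          field_simp
        rw [hrw, Real.mul_rpow (by positivity) hI0,
          Real.mul_rpow hC₀.le (Real.rpow_nonneg hD.le _),
          ← Real.rpow_mul hD.le, mul_one_div, mul_div_cancel_right₀ _ hp0.ne']
      rw [← hMeq]
      exact h5
  -- the case hypothesis controls the Hölder term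
  have hDsplit : D ^ ((p * θ + d) / p) = D ^ θ * D ^ ((d:ℝ)/p) := by
    rw [← Real.rpow_add hD]
    congr 1
    field_simp
  have hHbound : H * D ^ θ ≤ ((d:ℝ) / (p * θ)) * M := by
    rw [hDsplit] at hcase
    have h7 : H * D ^ θ * (p * θ * D ^ ((d:ℝ)/p)) ≤ (d:ℝ) * C₀ ^ (1/p) * N := by
      calc H * D ^ θ * (p * θ * D ^ ((d:ℝ)/p))
          = p * θ * H * (D ^ θ * D ^ ((d:ℝ)/p)) := by ring
        _ ≤ (d:ℝ) * C₀ ^ (1/p) * N := hcase.le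
    have h8 : H * D ^ θ ≤ (d:ℝ) * C₀ ^ (1/p) * N / (p * θ * D ^ ((d:ℝ)/p)) := by
      rw [le_div_iff₀ (mul_pos hpθ hDdp)]
      linarith
    have h9 : (d:ℝ) * C₀ ^ (1/p) * N / (p * θ * D ^ ((d:ℝ)/p)) =
        ((d:ℝ) / (p * θ)) * M := by
      rw [hMdef, hneg]
      field_simp
    linarith [h9 ▸ h8]
  calc |f x| ≤ H * D ^ θ + M := claim
    _ ≤ ((d:ℝ) / (p * θ)) * M + M := by linarith
    _ = ((d : ℝ) / (p * θ) + 1) * C₀ ^ (1 / p) * D ^ (-(d : ℝ) / p) * N := by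
        rw [hMdef]; ring
end

section
/- Let d ≥ 2 be an integer. For η ∈ (0, e^{−1}) let ψ_η : ℝ^d → ℝ be the logarithmic cut-off function defined by ψ_η(x) = ln(−ln‖x‖) − ln(−ln η) for 0 < ‖x‖ < η and ψ_η(x) = 0 otherwise. Then ∫_{{x : 0 < ‖x‖ < η}} ( ln(−ln‖x‖) − ln(−ln η) )² · (‖x‖ · ln‖x‖)^{−2} dx → 0 as η → 0⁺. (This integral equals ∫ ψ_η² |∇ψ_η|² = ¼ ∫ |∇(ψ_η²)|², so the L²(ℝ^d)-norm of the gradient of ψ_η² tends to 0 as η → 0⁺.) -/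
open MeasureTheory Filter Set Metric
open scoped ENNReal

local notation "dim" => Module.finrank ℝ

lemma lintegral_fun_norm_addHaar' {E : Type*} [NormedAddCommGroup E] [NormedSpace ℝ E]
    [MeasurableSpace E] [BorelSpace E] [Nontrivial E] [FiniteDimensional ℝ E]
    (μ : Measure E) [μ.IsAddHaarMeasure] {g : ℝ → ℝ≥0∞} (hg : Measurable g) :
    ∫⁻ x, g ‖x‖ ∂μ
      = μ.toSphere univ * ∫⁻ r in Ioi (0:ℝ), ENNReal.ofReal (r ^ (dim E - 1)) * g r := by
  have h0 : MeasurableSet ({0}ᶜ : Set E) := (measurableSet_singleton 0).compl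
  have hm : Measurable (fun p : sphere (0:E) 1 × Ioi (0:ℝ) => g p.2.1) :=
    hg.comp (measurable_subtype_coe.comp measurable_snd)
  have hgs : Measurable (fun r : Ioi (0:ℝ) => g r.1) := hg.comp measurable_subtype_coe
  calc ∫⁻ x, g ‖x‖ ∂μ = ∫⁻ x in ({0}ᶜ : Set E), g ‖x‖ ∂μ := by
        rw [restrict_compl_singleton]
    _ = ∫⁻ x : ({0}ᶜ : Set E), g ‖(x : E)‖ ∂(μ.comap (↑)) :=
        (lintegral_subtype_comap h0 _).symm
    _ = ∫⁻ p : sphere (0:E) 1 × Ioi (0:ℝ), g p.2.1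
          ∂(μ.toSphere.prod (.volumeIoiPow (dim E - 1))) := by
        rw [← (μ.measurePreserving_homeomorphUnitSphereProd).lintegral_comp hm]
        simp
    _ = μ.toSphere univ * ∫⁻ r : Ioi (0:ℝ), g r.1 ∂(Measure.volumeIoiPow (dim E - 1)) := by
        rw [lintegral_prod _ hm.aemeasurable]
        simp [lintegral_const, mul_comm]
    _ = μ.toSphere univ * ∫⁻ r in Ioi (0:ℝ), ENNReal.ofReal (r ^ (dim E - 1)) * g r := by
        congr 1
        rw [Measure.volumeIoiPow, lintegral_withDensity_eq_lintegral_mul _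
          (f := fun r : Ioi (0:ℝ) => ENNReal.ofReal (r.1 ^ (dim E - 1)))
          ((measurable_subtype_coe.pow_const _).ennreal_ofReal) hgs]
        exact lintegral_subtype_comap measurableSet_Ioi
          (fun r => ENNReal.ofReal (r ^ (dim E - 1)) * g r)

noncomputable def Gfun (r : ℝ) : ℝ := 2 * (-Real.log r) ^ (-(1:ℝ)/2)
noncomputable def bfun (r : ℝ) : ℝ := r⁻¹ * (-Real.log r) ^ (-(3:ℝ)/2)

lemma bfun_hasDeriv {x η : ℝ} (hx0 : 0 < x) (hxη : x ≤ η) (hη : η < Real.exp (-1)) :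
    HasDerivAt Gfun (bfun x) x := by
  have hlogx : 1 < -Real.log x := by
    have := Real.log_lt_log hx0 (lt_of_le_of_lt hxη hη)
    rw [Real.log_exp] at this; linarith
  have hne : -Real.log x ≠ 0 := by linarith
  have hpos : (0:ℝ) < -Real.log x := by linarith
  have hlog : HasDerivAt (fun r : ℝ => -Real.log r) (-x⁻¹) x := (Real.hasDerivAt_log hx0.ne').neg
  have hrpow : HasDerivAt (fun y : ℝ => y ^ (-(1:ℝ)/2))
      ((-(1:ℝ)/2) * (-Real.log x) ^ ((-(1:ℝ)/2) - 1)) (-Real.log x) :=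
    Real.hasDerivAt_rpow_const (Or.inl hne)
  have h := (hrpow.comp x hlog).const_mul (2:ℝ)
  convert h using 1
  · rfl
  · rfl
  · rfl
  rw [show ((-(1:ℝ)/2) - 1) = -(3:ℝ)/2 by norm_num]
  unfold bfun; ring

lemma lintegral_bfun_piece {a η : ℝ} (ha : a ∈ Set.Ioo (0:ℝ) η) (hη : η < Real.exp (-1)) :
    ∫⁻ r in Ioo a η, ENNReal.ofReal (bfun r) ≤ ENNReal.ofReal (Gfun η) := by
  obtain ⟨ha0, haη⟩ := ha
  have hsub : Icc a η ⊆ {(0:ℝ)}ᶜ := fun x hx => by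
    simp only [mem_compl_iff, mem_singleton_iff]; exact (lt_of_lt_of_le ha0 hx.1).ne'
  have hlogpos : ∀ x ∈ Icc a η, 0 < -Real.log x := fun x hx => by
    have hx0 : 0 < x := lt_of_lt_of_le ha0 hx.1
    have := Real.log_lt_log hx0 (lt_of_le_of_lt hx.2 hη)
    rw [Real.log_exp] at this; linarith
  have hc : ContinuousOn bfun (Icc a η) := by
    refine ContinuousOn.mul (continuousOn_inv₀.mono hsub) ?_
    exact ((Real.continuousOn_log.mono hsub).neg).rpow_const fun x hx => Or.inl (hlogpos x hx).ne'
  have hint : IntegrableOn bfun (Ioo a η) := (hc.integrableOn_Icc).mono_set Ioo_subset_Icc_self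
  have hnn : 0 ≤ᵐ[volume.restrict (Ioo a η)] bfun := by
    filter_upwards [ae_restrict_mem measurableSet_Ioo] with r hr
    have hr0 : 0 < r := lt_of_lt_of_le ha0 hr.1.le
    exact mul_nonneg (inv_nonneg.2 hr0.le)
      (Real.rpow_nonneg (hlogpos r (Ioo_subset_Icc_self hr)).le _)
  rw [← ofReal_integral_eq_lintegral_ofReal hint hnn]
  have hval : ∫ r in Ioo a η, bfun r = Gfun η - Gfun a := by
    rw [← integral_Ioc_eq_integral_Ioo, ← intervalIntegral.integral_of_le haη.le]
    exact intervalIntegral.integral_eq_sub_of_hasDerivAt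
      (fun x hx => by
        rw [uIcc_of_le haη.le] at hx
        exact bfun_hasDeriv (lt_of_lt_of_le ha0 hx.1) hx.2 hη)
      (hc.intervalIntegrable_of_Icc haη.le)
  rw [hval]
  apply ENNReal.ofReal_le_ofReal
  have : 0 ≤ Gfun a := mul_nonneg (by norm_num)
    (Real.rpow_nonneg (hlogpos a ⟨le_refl a, haη.le⟩).le _)
  linarith

lemma measurable_rpow_const' (c : ℝ) : Measurable fun x : ℝ => x ^ c := by
  have heq : (fun x : ℝ => x ^ c) = fun x =>
      if 0 < x then Real.exp (Real.log x * c)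
      else if x = 0 then (if c = 0 then 1 else 0)
      else Real.exp (Real.log x * c) * Real.cos (c * Real.pi) := by
    funext x
    rcases lt_trichotomy x 0 with h | h | h
    · rw [Real.rpow_def_of_neg h]
      simp [not_lt.2 h.le, h.ne]
    · subst h
      simp only [lt_irrefl, if_false, if_pos rfl]
      rcases eq_or_ne c 0 with hc | hc
      · simp [hc]
      · simp [Real.zero_rpow hc, hc]
    · rw [Real.rpow_def_of_pos h]; simp [h]
  rw [heq]
  refine Measurable.ite measurableSet_Ioi (by measurability) ?_
  exact Measurable.ite (measurableSet_singleton 0) measurable_const (by measurability)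

lemma bfun_measurable : Measurable fun r : ℝ => ENNReal.ofReal (bfun r) := by
  unfold bfun
  exact (measurable_inv.mul ((measurable_rpow_const' _).comp Real.measurable_log.neg)).ennreal_ofReal

lemma lintegral_bfun {η : ℝ} (h0 : 0 < η) (hη : η < Real.exp (-1)) :
    ∫⁻ r in Ioo (0:ℝ) η, ENNReal.ofReal (bfun r) ≤ ENNReal.ofReal (Gfun η) := by
  set h : ℝ → ℝ≥0∞ := fun r => ENNReal.ofReal (bfun r) with hh
  set s : ℕ → Set ℝ := fun n => Ioo (η / (n + 2)) η with hs
  have hsmono : Monotone s := fun m n hmn => Ioo_subset_Ioo_left (by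
    have : (m:ℝ) ≤ n := Nat.cast_le.2 hmn
    gcongr <;> linarith)
  have hunion : ⋃ n, s n = Ioo (0:ℝ) η := by
    apply subset_antisymm
    · exact iUnion_subset fun n => Ioo_subset_Ioo_left (by positivity)
    · intro r hr
      obtain ⟨n, hn⟩ := exists_nat_gt (η / r)
      refine mem_iUnion.2 ⟨n, ?_, hr.2⟩
      rw [div_lt_iff₀ (by positivity)]
      rw [div_lt_iff₀ hr.1] at hn
      nlinarith [hr.1]
  calc ∫⁻ r in Ioo (0:ℝ) η, h r = ∫⁻ r, (Ioo (0:ℝ) η).indicator h r := by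
        rw [lintegral_indicator measurableSet_Ioo _]
    _ = ∫⁻ r, ⨆ n, (s n).indicator h r := by
        congr 1; funext x
        rw [← hunion, Set.indicator_iUnion_apply (M := ℝ≥0∞) rfl]
    _ = ⨆ n, ∫⁻ r, (s n).indicator h r := by
        apply lintegral_iSup
        · exact fun n => bfun_measurable.indicator measurableSet_Ioo
        · exact fun m n hmn x =>
            Set.indicator_le_indicator_of_subset (hsmono hmn) (fun _ => zero_le) x
    _ ≤ ENNReal.ofReal (Gfun η) := by
        apply iSup_le
        intro n
        rw [lintegral_indicator measurableSet_Ioo _]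
        exact lintegral_bfun_piece ⟨by positivity, by
          rw [div_lt_iff₀ (by positivity)]
          nlinarith⟩ hη

lemma sq_log_le {s : ℝ} (hs : 1 ≤ s) : (Real.log s) ^ 2 ≤ 16 * s ^ ((1:ℝ)/2) := by
  have hs0 : (0:ℝ) < s := lt_of_lt_of_le one_pos hs
  have h4 : Real.log s = 4 * Real.log (s ^ ((1:ℝ)/4)) := by
    rw [Real.log_rpow hs0]; ring
  have hq : (0:ℝ) < s ^ ((1:ℝ)/4) := Real.rpow_pos_of_pos hs0 _
  have hlq0 : 0 ≤ Real.log (s ^ ((1:ℝ)/4)) := Real.log_nonneg (Real.one_le_rpow hs (by norm_num))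
  have hle : Real.log (s ^ ((1:ℝ)/4)) ≤ s ^ ((1:ℝ)/4) := by
    have := Real.log_le_sub_one_of_pos hq
    linarith
  have hsq : (Real.log (s ^ ((1:ℝ)/4))) ^ 2 ≤ (s ^ ((1:ℝ)/4)) ^ 2 :=
    pow_le_pow_left₀ hlq0 hle 2
  have hrw : (s ^ ((1:ℝ)/4)) ^ 2 = s ^ ((1:ℝ)/2) := by
    rw [← Real.rpow_natCast (s ^ ((1:ℝ)/4)) 2, ← Real.rpow_mul hs0.le]
    norm_num
  calc (Real.log s) ^ 2 = 16 * (Real.log (s ^ ((1:ℝ)/4))) ^ 2 := by rw [h4]; ring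
    _ ≤ 16 * (s ^ ((1:ℝ)/4)) ^ 2 := by linarith
    _ = 16 * s ^ ((1:ℝ)/2) := by rw [hrw]

lemma real_bound {r η : ℝ} {n : ℕ} (hn : 1 ≤ n) (hr : r ∈ Set.Ioo (0:ℝ) η)
    (hη : η < Real.exp (-1)) :
    r ^ n * ((Real.log (-Real.log r) - Real.log (-Real.log η)) ^ 2 * ((r * Real.log r) ^ 2)⁻¹)
      ≤ (16 * (-Real.log η) ^ (-(1:ℝ)/2)) * bfun r := by
  obtain ⟨hr0, hrη⟩ := hr
  have hη0 : 0 < η := lt_trans hr0 hrη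
  set t : ℝ := -Real.log r with htdef
  set T : ℝ := -Real.log η with hTdef
  have hT1 : 1 < T := by
    have := Real.log_lt_log hη0 hη
    rw [Real.log_exp] at this; simp only [hTdef]; linarith
  have hTt : T < t := by
    have := Real.log_lt_log hr0 hrη
    simp only [htdef, hTdef]; linarith
  have ht1 : 1 < t := lt_trans hT1 hTt
  have ht0 : (0:ℝ) < t := lt_trans one_pos ht1
  have hT0 : (0:ℝ) < T := lt_trans one_pos hT1
  have hr1 : r < 1 := by
    calc r < η := hrη
      _ < Real.exp (-1) := hη
      _ < 1 := by rw [← Real.exp_zero]; exact Real.exp_lt_exp.2 (by norm_num)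
  have hlogr : Real.log r = -t := by simp [htdef]
  have hA : (Real.log t - Real.log T) ^ 2 ≤ 16 * (t ^ ((1:ℝ)/2) * T ^ (-(1:ℝ)/2)) := by
    rw [← Real.log_div ht0.ne' hT0.ne']
    have h1 : 1 ≤ t / T := (one_le_div hT0).2 hTt.le
    calc (Real.log (t/T)) ^ 2 ≤ 16 * (t/T) ^ ((1:ℝ)/2) := sq_log_le h1
      _ = 16 * (t ^ ((1:ℝ)/2) * T ^ (-(1:ℝ)/2)) := by
          rw [Real.div_rpow ht0.le hT0.le, div_eq_mul_inv, ← Real.rpow_neg hT0.le]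
          norm_num
  have hrn : r ^ n ≤ r := by
    calc r ^ n ≤ r ^ 1 := pow_le_pow_of_le_one hr0.le hr1.le hn
      _ = r := pow_one r
  have ht2 : t ^ ((1:ℝ)/2) * ((t:ℝ) ^ (2:ℕ))⁻¹ = t ^ (-(3:ℝ)/2) := by
    rw [← Real.rpow_natCast t 2, ← Real.rpow_neg ht0.le, ← Real.rpow_add ht0]
    norm_num
  have hsq : ((r * Real.log r) ^ 2)⁻¹ = ((r * t) ^ 2)⁻¹ := by rw [hlogr]; ring_nf
  rw [hsq]
  have key : r ^ n * (((Real.log t - Real.log T) ^ 2) * ((r * t) ^ 2)⁻¹)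
      ≤ r * ((16 * (t ^ ((1:ℝ)/2) * T ^ (-(1:ℝ)/2))) * ((r * t) ^ 2)⁻¹) := by
    gcongr
  refine le_trans key (le_of_eq ?_)
  have : r * ((16 * (t ^ ((1:ℝ)/2) * T ^ (-(1:ℝ)/2))) * ((r * t) ^ 2)⁻¹)
      = (16 * T ^ (-(1:ℝ)/2)) * (r⁻¹ * (t ^ ((1:ℝ)/2) * ((t:ℝ) ^ (2:ℕ))⁻¹)) := by
    field_simp
  rw [this, ht2]
  simp [bfun, htdef]

/-- Lemma `PSILEM`, second part: for the logarithmic cut-off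
`ψ_η(x) = ln(−ln‖x‖) − ln(−ln η)` on `0 < ‖x‖ < η`, the quantity
`∫ ψ_η² |∇ψ_η|² = ∫_{0<‖x‖<η} (ln(−ln‖x‖) − ln(−ln η))² (‖x‖ ln‖x‖)^{-2} dx`
tends to `0` as `η → 0⁺` (along `η ∈ (0, e⁻¹)`); hence `‖∇(ψ_η²)‖_{L²(ℝ^d)} → 0`. -/
theorem psi_eta_sq_grad_tendsto_zero (d : ℕ) (hd : 2 ≤ d) :
    Tendsto
      (fun η : ℝ => ∫⁻ x : EuclideanSpace ℝ (Fin d) in {x | 0 < ‖x‖ ∧ ‖x‖ < η},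
        ENNReal.ofReal
          ((Real.log (-Real.log ‖x‖) - Real.log (-Real.log η)) ^ 2 *
            ((‖x‖ * Real.log ‖x‖) ^ 2)⁻¹))
      (nhdsWithin 0 (Set.Ioo 0 (Real.exp (-1)))) (nhds 0) := by
  haveI : Nontrivial (EuclideanSpace ℝ (Fin d)) :=
    Module.nontrivial_of_finrank_pos (R := ℝ) (by rw [finrank_euclideanSpace_fin]; omega)
  set μ : Measure (EuclideanSpace ℝ (Fin d)) := volume with hμ
  set K : ℝ≥0∞ := μ.toSphere univ with hK
  have hKne : K ≠ ⊤ := measure_ne_top _ _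
  set U : ℝ → ℝ≥0∞ := fun η => K *
    (ENNReal.ofReal (16 * (-Real.log η) ^ (-(1:ℝ)/2)) * ENNReal.ofReal (Gfun η)) with hU
  have hbound : ∀ η ∈ Set.Ioo (0:ℝ) (Real.exp (-1)),
      (∫⁻ x : EuclideanSpace ℝ (Fin d) in {x | 0 < ‖x‖ ∧ ‖x‖ < η},
        ENNReal.ofReal
          ((Real.log (-Real.log ‖x‖) - Real.log (-Real.log η)) ^ 2 *
            ((‖x‖ * Real.log ‖x‖) ^ 2)⁻¹)) ≤ U η := by
    intro η hη
    obtain ⟨hη0, hη1⟩ := hη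
    have hT1 : 1 < -Real.log η := by
      have := Real.log_lt_log hη0 hη1
      rw [Real.log_exp] at this; linarith
    set F : ℝ → ℝ≥0∞ := fun r => ENNReal.ofReal
      ((Real.log (-Real.log r) - Real.log (-Real.log η)) ^ 2 *
        ((r * Real.log r) ^ 2)⁻¹) with hF
    have hFm : Measurable F := by
      apply Measurable.ennreal_ofReal
      exact (((Real.measurable_log.comp Real.measurable_log.neg).sub
        measurable_const).pow_const 2).mul
        (((measurable_id.mul Real.measurable_log).pow_const 2).inv)
    set g : ℝ → ℝ≥0∞ := (Set.Ioo (0:ℝ) η).indicator F with hg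
    have hgm : Measurable g := hFm.indicator measurableSet_Ioo
    have hsetm : MeasurableSet {x : EuclideanSpace ℝ (Fin d) | 0 < ‖x‖ ∧ ‖x‖ < η} :=
      measurable_norm measurableSet_Ioo
    have step1 : (∫⁻ x : EuclideanSpace ℝ (Fin d) in {x | 0 < ‖x‖ ∧ ‖x‖ < η},
        ENNReal.ofReal
          ((Real.log (-Real.log ‖x‖) - Real.log (-Real.log η)) ^ 2 *
            ((‖x‖ * Real.log ‖x‖) ^ 2)⁻¹)) = ∫⁻ x, g ‖x‖ ∂μ := by
      rw [← lintegral_indicator hsetm]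
      congr 1
    rw [step1, lintegral_fun_norm_addHaar' μ hgm]
    have hd1 : Module.finrank ℝ (EuclideanSpace ℝ (Fin d)) - 1 = d - 1 := by
      rw [finrank_euclideanSpace_fin]
    rw [hd1]
    have step3 : ∫⁻ r in Ioi (0:ℝ), ENNReal.ofReal (r ^ (d - 1)) * g r
        = ∫⁻ r in Ioo (0:ℝ) η, ENNReal.ofReal (r ^ (d - 1)) * F r := by
      have heq : (fun r : ℝ => ENNReal.ofReal (r ^ (d - 1)) * g r)
          = (Set.Ioo (0:ℝ) η).indicator (fun r => ENNReal.ofReal (r ^ (d - 1)) * F r) := by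
        funext r
        by_cases hr : r ∈ Set.Ioo (0:ℝ) η
        · rw [Set.indicator_of_mem hr, hg, Set.indicator_of_mem hr]
        · rw [Set.indicator_of_notMem hr, hg, Set.indicator_of_notMem hr, mul_zero]
      rw [heq, lintegral_indicator measurableSet_Ioo, Measure.restrict_restrict measurableSet_Ioo,
        Set.inter_eq_left.2 Set.Ioo_subset_Ioi_self]
    rw [step3]
    have step4 : ∫⁻ r in Ioo (0:ℝ) η, ENNReal.ofReal (r ^ (d - 1)) * F r
        ≤ ∫⁻ r in Ioo (0:ℝ) η,
            ENNReal.ofReal (16 * (-Real.log η) ^ (-(1:ℝ)/2)) * ENNReal.ofReal (bfun r) := by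
      apply setLIntegral_mono (by exact (bfun_measurable.const_mul _))
      intro r hr
      have hr0 : 0 < r := hr.1
      have hc0 : 0 ≤ 16 * (-Real.log η) ^ (-(1:ℝ)/2) := by positivity
      calc ENNReal.ofReal (r ^ (d - 1)) * F r
          = ENNReal.ofReal (r ^ (d - 1) *
              ((Real.log (-Real.log r) - Real.log (-Real.log η)) ^ 2 *
                ((r * Real.log r) ^ 2)⁻¹)) := (ENNReal.ofReal_mul (by positivity)).symm
        _ ≤ ENNReal.ofReal ((16 * (-Real.log η) ^ (-(1:ℝ)/2)) * bfun r) :=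
            ENNReal.ofReal_le_ofReal (real_bound (by omega) hr hη1)
        _ = ENNReal.ofReal (16 * (-Real.log η) ^ (-(1:ℝ)/2)) * ENNReal.ofReal (bfun r) :=
            ENNReal.ofReal_mul hc0
    have step5 : ∫⁻ r in Ioo (0:ℝ) η,
          ENNReal.ofReal (16 * (-Real.log η) ^ (-(1:ℝ)/2)) * ENNReal.ofReal (bfun r)
        = ENNReal.ofReal (16 * (-Real.log η) ^ (-(1:ℝ)/2)) *
            ∫⁻ r in Ioo (0:ℝ) η, ENNReal.ofReal (bfun r) :=
      lintegral_const_mul _ bfun_measurable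
    have step6 := lintegral_bfun hη0 hη1
    rw [hU]
    apply mul_le_mul_right
    calc ∫⁻ r in Ioo (0:ℝ) η, ENNReal.ofReal (r ^ (d - 1)) * F r
        ≤ _ := step4
      _ = _ := step5
      _ ≤ ENNReal.ofReal (16 * (-Real.log η) ^ (-(1:ℝ)/2)) * ENNReal.ofReal (Gfun η) :=
          mul_le_mul_right step6 _
  have h1 : Tendsto (fun η : ℝ => -Real.log η)
      (nhdsWithin 0 (Set.Ioo 0 (Real.exp (-1)))) atTop := by
    apply tendsto_neg_atBot_atTop.comp
    apply Real.tendsto_log_nhdsNE_zero.mono_left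
    apply nhdsWithin_mono
    intro x hx
    exact ne_of_gt hx.1
  have h2 : Tendsto (fun η : ℝ => (-Real.log η) ^ (-(1:ℝ)/2))
      (nhdsWithin 0 (Set.Ioo 0 (Real.exp (-1)))) (nhds 0) := by
    rw [show (-(1:ℝ)/2) = -(1/2 : ℝ) by norm_num]
    exact (tendsto_rpow_neg_atTop (by norm_num : (0:ℝ) < 1/2)).comp h1
  have h3 : Tendsto (fun η : ℝ => ENNReal.ofReal (16 * (-Real.log η) ^ (-(1:ℝ)/2)))
      (nhdsWithin 0 (Set.Ioo 0 (Real.exp (-1)))) (nhds 0) := by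
    have := (ENNReal.tendsto_ofReal (h2.const_mul 16))
    simpa using this
  have h4 : Tendsto (fun η : ℝ => ENNReal.ofReal (Gfun η))
      (nhdsWithin 0 (Set.Ioo 0 (Real.exp (-1)))) (nhds 0) := by
    have := (ENNReal.tendsto_ofReal (h2.const_mul 2))
    simpa [Gfun] using this
  have hUlim : Tendsto U (nhdsWithin 0 (Set.Ioo 0 (Real.exp (-1)))) (nhds 0) := by
    rw [hU]
    have hmul : Tendsto (fun η : ℝ =>
        ENNReal.ofReal (16 * (-Real.log η) ^ (-(1:ℝ)/2)) * ENNReal.ofReal (Gfun η))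
        (nhdsWithin 0 (Set.Ioo 0 (Real.exp (-1)))) (nhds 0) := by
      have := ENNReal.Tendsto.mul h3 (Or.inr ENNReal.zero_ne_top) h4 (Or.inr ENNReal.zero_ne_top)
      simpa using this
    have := ENNReal.Tendsto.const_mul hmul (Or.inr hKne)
    simpa using this
  apply tendsto_of_tendsto_of_tendsto_of_le_of_le' tendsto_const_nhds hUlim
  · exact Filter.Eventually.of_forall fun _ => zero_le
  · exact eventually_mem_nhdsWithin.mono hbound
end

section
/- Let T ∈ (0, ∞] and set τ := min{1, T/2}. Let k ≥ 0 and A, B ≥ 0 be constants, let g : ℝ → ℝ be nonnegative and locally integrable, and let y : [0, T) → ℝ be nonnegative, continuous on [0, T), and differentiable on (0, T) with y′(t) ≤ g(t)·y(t) + k for all t ∈ (0, T). Assume that for every t ≥ 0 with t + τ ≤ T one has ∫_t^{t+τ} y(s) ds ≤ A and ∫_t^{t+τ} g(s) ds ≤ B. Then y(t) ≤ ( y(0) + A + 2k )·e^{2B} for all t ∈ [0, T). -/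
open MeasureTheory Set Filter

lemma exp_primitive_integral_le (G : ℝ → ℝ) (hG : Integrable G) (hG0 : ∀ s, 0 ≤ G s)
    (a b : ℝ) (hab : a ≤ b) :
    ∫ s in a..b, G s * Real.exp (∫ u in a..s, G u) ≤ Real.exp (∫ u in a..b, G u) - 1 := by
  set h : ℝ → ℝ := fun t => ∫ u in a..t, G u with hh
  have hGi : ∀ x y : ℝ, IntervalIntegrable G volume x y := fun x y => hG.intervalIntegrable
  have hcont : Continuous h := intervalIntegral.continuous_primitive (fun x y => hGi x y) a
  have hadd : ∀ s t : ℝ, h s + ∫ u in s..t, G u = h t := fun s t =>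
    intervalIntegral.integral_add_adjacent_intervals (hGi a s) (hGi s t)
  have hmono : Monotone h := by
    intro s t hst
    have h1 := hadd s t
    have h2 : 0 ≤ ∫ u in s..t, G u := intervalIntegral.integral_nonneg hst fun u _ => hG0 u
    linarith
  have hGe : ∀ x y : ℝ, IntervalIntegrable (fun s => G s * Real.exp (h s)) volume x y :=
    fun x y => (hGi x y).mul_continuousOn (Real.continuous_exp.comp hcont).continuousOn
  have ha0 : h a = 0 := intervalIntegral.integral_same
  have key : ∀ δ > (0:ℝ), ∫ s in a..b, G s * Real.exp (h s)
      ≤ Real.exp δ * (Real.exp (h b) - 1) := by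
    intro δ hδ
    obtain ⟨η, hη, H⟩ := Metric.uniformContinuousOn_iff.1
      (isCompact_Icc.uniformContinuousOn_of_continuous hcont.continuousOn) δ hδ
    obtain ⟨n, hn⟩ := exists_nat_gt (max 1 ((b - a) / η))
    have hn1 : (1:ℝ) < n := lt_of_le_of_lt (le_max_left _ _) hn
    have hnpos : (0:ℝ) < n := by linarith
    set Δ : ℝ := (b - a) / n with hΔ
    have hΔ0 : 0 ≤ Δ := div_nonneg (by linarith) hnpos.le
    set p : ℕ → ℝ := fun i => a + i * Δ with hp
    have hp0 : p 0 = a := by simp [hp]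
    have hpn : p n = b := by
      simp only [hp, hΔ]
      field_simp
      ring
    have hpstep : ∀ i : ℕ, p (i + 1) = p i + Δ := by
      intro i; simp only [hp]; push_cast; ring
    have hpmem : ∀ i : ℕ, i ≤ n → p i ∈ Icc a b := by
      intro i hi
      constructor
      · have : 0 ≤ (i:ℝ) * Δ := mul_nonneg (Nat.cast_nonneg i) hΔ0
        simp only [hp]; linarith
      · have h1 : (i:ℝ) * Δ ≤ (n:ℝ) * Δ :=
          mul_le_mul_of_nonneg_right (Nat.cast_le.2 hi) hΔ0
        have h2 : (n:ℝ) * Δ = b - a := by rw [hΔ]; field_simp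
        simp only [hp]; linarith
    have hΔη : Δ < η := by
      rw [hΔ, div_lt_iff₀ hnpos]
      have : (b - a) / η < n := lt_of_le_of_lt (le_max_right _ _) hn
      rw [div_lt_iff₀ hη] at this
      linarith
    have piece : ∀ i : ℕ, i < n → ∫ s in p i..p (i + 1), G s * Real.exp (h s)
        ≤ Real.exp δ * (Real.exp (h (p (i + 1))) - Real.exp (h (p i))) := by
      intro i hi
      have hple : p i ≤ p (i + 1) := by rw [hpstep]; linarith
      have hmem1 := hpmem i hi.le
      have hmem2 := hpmem (i + 1) hi
      have hdist : dist (p (i+1)) (p i) < η := by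
        rw [Real.dist_eq, hpstep]
        rw [abs_of_nonneg (by linarith : (0:ℝ) ≤ p i + Δ - p i)]
        simpa using hΔη
      have hhd : h (p (i + 1)) - h (p i) < δ := by
        have := H (p (i+1)) hmem2 (p i) hmem1 hdist
        rw [Real.dist_eq] at this
        exact lt_of_le_of_lt (le_abs_self _) this
      set x := h (p i)
      set z := h (p (i + 1))
      have hxz : x ≤ z := hmono hple
      have h1 : ∫ s in p i..p (i + 1), G s * Real.exp (h s)
          ≤ ∫ s in p i..p (i + 1), G s * Real.exp z := by
        apply intervalIntegral.integral_mono_on hple (hGe _ _) ((hGi _ _).mul_const _)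
        intro s hs
        exact mul_le_mul_of_nonneg_left (Real.exp_le_exp.2 (hmono hs.2)) (hG0 s)
      have h2 : ∫ s in p i..p (i + 1), G s * Real.exp z = (z - x) * Real.exp z := by
        rw [intervalIntegral.integral_mul_const]
        have := hadd (p i) (p (i+1))
        have hz : ∫ u in p i..p (i+1), G u = z - x := by linarith
        rw [hz]
      have e2 : (z - x) * Real.exp x ≤ Real.exp z - Real.exp x := by
        have h3 := Real.add_one_le_exp (z - x)
        have h4 : Real.exp (z - x) * Real.exp x = Real.exp z := by
          rw [← Real.exp_add]; ring_nf
        nlinarith [Real.exp_pos x]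
      have e1 : Real.exp z ≤ Real.exp δ * Real.exp x := by
        rw [← Real.exp_add]
        exact Real.exp_le_exp.2 (by linarith)
      have h3 : (z - x) * Real.exp z ≤ Real.exp δ * (Real.exp z - Real.exp x) := by
        calc (z - x) * Real.exp z ≤ (z - x) * (Real.exp δ * Real.exp x) := by
              exact mul_le_mul_of_nonneg_left e1 (by linarith)
          _ = Real.exp δ * ((z - x) * Real.exp x) := by ring
          _ ≤ Real.exp δ * (Real.exp z - Real.exp x) := by
              exact mul_le_mul_of_nonneg_left e2 (Real.exp_pos δ).le
      calc ∫ s in p i..p (i + 1), G s * Real.exp (h s)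
          ≤ (z - x) * Real.exp z := h1.trans_eq h2
        _ ≤ Real.exp δ * (Real.exp z - Real.exp x) := h3
    have hsum1 := intervalIntegral.sum_integral_adjacent_intervals
      (f := fun s => G s * Real.exp (h s)) (μ := volume) (a := p) (n := n)
      (fun k _ => hGe _ _)
    rw [hp0, hpn] at hsum1
    have hsum2 : ∑ i ∈ Finset.range n, (Real.exp (h (p (i+1))) - Real.exp (h (p i)))
        = Real.exp (h b) - 1 := by
      rw [Finset.sum_range_sub (fun i => Real.exp (h (p i))), hp0, hpn, ha0, Real.exp_zero]
    calc ∫ s in a..b, G s * Real.exp (h s)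
        = ∑ i ∈ Finset.range n, ∫ s in p i..p (i+1), G s * Real.exp (h s) := hsum1.symm
      _ ≤ ∑ i ∈ Finset.range n, Real.exp δ * (Real.exp (h (p (i+1))) - Real.exp (h (p i))) :=
          Finset.sum_le_sum fun i hi => piece i (Finset.mem_range.1 hi)
      _ = Real.exp δ * (Real.exp (h b) - 1) := by rw [← Finset.mul_sum, hsum2]
  have hlim : Tendsto (fun δ => Real.exp δ * (Real.exp (h b) - 1)) (nhdsWithin 0 (Ioi 0))
      (nhds (Real.exp (h b) - 1)) := by
    have : Tendsto (fun δ => Real.exp δ * (Real.exp (h b) - 1)) (nhds 0)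
        (nhds (Real.exp (h b) - 1)) := by
      have := (Real.continuous_exp.mul (continuous_const (y := Real.exp (h b) - 1))).tendsto (0:ℝ)
      simpa using (Real.continuous_exp.tendsto 0).mul_const (Real.exp (h b) - 1)
    exact this.mono_left nhdsWithin_le_nhds
  exact ge_of_tendsto hlim (by filter_upwards [self_mem_nhdsWithin] with δ hδ using key δ hδ)

lemma gronwall_aux (G : ℝ → ℝ) (hG : Integrable G) (hG0 : ∀ s, 0 ≤ G s)
    (y : ℝ → ℝ) (a b : ℝ) (hab : a ≤ b) (hy : ContinuousOn y (Icc a b))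
    (c : ℝ) (hc : 0 ≤ c)
    (hineq : ∀ t ∈ Icc a b, y t ≤ c + ∫ s in a..t, G s * y s) :
    y b ≤ c * Real.exp (∫ s in a..b, G s) := by
  set h : ℝ → ℝ := fun t => ∫ u in a..t, G u with hh
  have hGi : ∀ x y : ℝ, IntervalIntegrable G volume x y := fun x y => hG.intervalIntegrable
  have hcont : Continuous h := intervalIntegral.continuous_primitive (fun x y => hGi x y) a
  have hadd : ∀ s t : ℝ, h s + ∫ u in s..t, G u = h t := fun s t =>
    intervalIntegral.integral_add_adjacent_intervals (hGi a s) (hGi s t)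
  have hmono : Monotone h := by
    intro s t hst
    have h1 := hadd s t
    have h2 : 0 ≤ ∫ u in s..t, G u := intervalIntegral.integral_nonneg hst fun u _ => hG0 u
    linarith
  have ha0 : h a = 0 := intervalIntegral.integral_same
  have hexpc : Continuous fun t => Real.exp (h t) := Real.continuous_exp.comp hcont
  -- integrability of G * y on Icc a b
  obtain ⟨C, hC⟩ := isCompact_Icc.exists_bound_of_continuousOn hy
  have hGyint : IntegrableOn (fun s => G s * y s) (Icc a b) := by
    have hbd : ∀ᵐ x ∂(volume.restrict (Icc a b)), ‖y x‖ ≤ C :=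
      (ae_restrict_iff' measurableSet_Icc).2 (ae_of_all _ hC)
    have := Integrable.bdd_mul (c := C) hG.integrableOn
      (hy.aestronglyMeasurable measurableSet_Icc) hbd
    exact this.congr (ae_of_all _ fun x => mul_comm (y x) (G x))
  have key : ∀ ε > (0:ℝ), y b ≤ (c + ε) * Real.exp (h b) := by
    intro ε hε
    by_contra hcon
    push_neg at hcon
    set E : Set ℝ := {t ∈ Icc a b | (c + ε) * Real.exp (h t) < y t} with hE
    have hEne : E.Nonempty := ⟨b, ⟨⟨hab, le_rfl⟩, hcon⟩⟩
    have hEsub : E ⊆ Icc a b := fun t ht => ht.1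
    have hEbdd : BddBelow E := (bddBelow_Icc : BddBelow (Icc a b)).mono hEsub
    set t₀ := sInf E with ht₀def
    have ht₀cl : t₀ ∈ closure E := csInf_mem_closure hEne hEbdd
    have ht₀I : t₀ ∈ Icc a b := isClosed_Icc.closure_subset ((closure_mono hEsub).trans
      (by rw [isClosed_Icc.closure_eq]) ht₀cl)
    have hcont2 : ContinuousOn (fun t => y t - (c + ε) * Real.exp (h t)) (Icc a b) :=
      hy.sub ((continuous_const.mul hexpc).continuousOn)
    have hClosed : IsClosed {t ∈ Icc a b | 0 ≤ y t - (c + ε) * Real.exp (h t)} := by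
      have := hcont2.preimage_isClosed_of_isClosed isClosed_Icc (isClosed_Ici (a := (0:ℝ)))
      simpa [Set.preimage, Set.inter_def] using this
    have hyt₀ : (c + ε) * Real.exp (h t₀) ≤ y t₀ := by
      have hsub2 : E ⊆ {t ∈ Icc a b | 0 ≤ y t - (c + ε) * Real.exp (h t)} :=
        fun t ht => ⟨ht.1, by linarith [ht.2]⟩
      have := hClosed.closure_subset ((closure_mono hsub2) ht₀cl)
      linarith [this.2]
    have hat₀ : a < t₀ := by
      rcases lt_or_eq_of_le ht₀I.1 with h' | h'
      · exact h'
      · exfalso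
        have h1 := hineq a ⟨le_rfl, hab⟩
        rw [intervalIntegral.integral_same] at h1
        rw [← h', ha0, Real.exp_zero, mul_one] at hyt₀
        linarith
    have hbefore : ∀ s ∈ Ioo a t₀, y s ≤ (c + ε) * Real.exp (h s) := by
      intro s hs
      by_contra hcon2
      push_neg at hcon2
      have hsE : s ∈ E := ⟨⟨hs.1.le, hs.2.le.trans ht₀I.2⟩, hcon2⟩
      exact absurd (csInf_le hEbdd hsE) (not_le.2 hs.2)
    have hIoosub : Ioo a t₀ ⊆ Icc a b := fun s hs => ⟨hs.1.le, hs.2.le.trans ht₀I.2⟩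
    have hint1 : ∫ s in a..t₀, G s * y s ≤ ∫ s in a..t₀, G s * ((c + ε) * Real.exp (h s)) := by
      rw [intervalIntegral.integral_of_le hat₀.le, intervalIntegral.integral_of_le hat₀.le,
        integral_Ioc_eq_integral_Ioo, integral_Ioc_eq_integral_Ioo]
      apply setIntegral_mono_on
      · exact hGyint.mono_set (hIoosub)
      · exact ((hGi a b).mul_continuousOn ((continuous_const.mul hexpc).continuousOn)).1.mono_set
          (Ioo_subset_Ioc_self.trans (Ioc_subset_Ioc_right ht₀I.2))
      · exact measurableSet_Ioo
      · intro s hs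
        exact mul_le_mul_of_nonneg_left (hbefore s hs) (hG0 s)
    have hint2 : ∫ s in a..t₀, G s * ((c + ε) * Real.exp (h s))
        = (c + ε) * ∫ s in a..t₀, G s * Real.exp (h s) := by
      rw [← intervalIntegral.integral_const_mul]
      exact intervalIntegral.integral_congr fun s _ => by ring
    have hint3 := exp_primitive_integral_le G hG hG0 a t₀ hat₀.le
    have h4 := hineq t₀ ht₀I
    have h5 : (c + ε) * (∫ s in a..t₀, G s * Real.exp (∫ u in a..s, G u))
        ≤ (c + ε) * (Real.exp (h t₀) - 1) :=
      mul_le_mul_of_nonneg_left hint3 (by linarith)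
    change (c + ε) * (∫ s in a..t₀, G s * Real.exp (h s)) ≤ (c + ε) * (Real.exp (h t₀) - 1) at h5
    nlinarith [hyt₀]
  have hlim : Tendsto (fun ε => (c + ε) * Real.exp (h b)) (nhdsWithin 0 (Ioi 0))
      (nhds (c * Real.exp (h b))) := by
    have : Tendsto (fun ε : ℝ => (c + ε) * Real.exp (h b)) (nhds 0)
        (nhds (c * Real.exp (h b))) := by
      have hcc : Continuous (fun ε : ℝ => (c + ε) * Real.exp (h b)) := by continuity
      have := hcc.tendsto (0:ℝ)
      simpa using this
    exact this.mono_left nhdsWithin_le_nhds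
  exact ge_of_tendsto hlim (by filter_upwards [self_mem_nhdsWithin] with ε hε using key ε hε)

open MeasureTheory

/-- The ODE-comparison argument used in Lemmas `RHOL2` and `LEM13`: if `y' ≤ g y + k`
on `(0, T)` with `T ∈ (0, ∞]`, `τ = min{1, T/2}`, and the sliding integrals of `y`
and `g` over intervals of length `τ` are bounded by `A` and `B` respectively, then
`y(t) ≤ (y(0) + A + 2k) e^{2B}` on `[0, T)`. -/
theorem ode_comparison_time_averaged
    (T : EReal) (hT : 0 < T) (τ : ℝ)
    (hτ : τ = if T = ⊤ then 1 else min 1 (T.toReal / 2))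
    (k A B : ℝ) (hk : 0 ≤ k) (hA : 0 ≤ A) (hB : 0 ≤ B)
    (g : ℝ → ℝ) (hg : ∀ s, 0 ≤ g s)
    (hgloc : ∀ t₁ t₂ : ℝ, 0 ≤ t₁ → (t₂ : EReal) < T → IntegrableOn g (Set.Icc t₁ t₂))
    (y y' : ℝ → ℝ)
    (hynonneg : ∀ t : ℝ, 0 ≤ t → (t : EReal) < T → 0 ≤ y t)
    (hycont : ContinuousOn y {s : ℝ | 0 ≤ s ∧ (s : EReal) < T})
    (hyderiv : ∀ t : ℝ, 0 < t → (t : EReal) < T → HasDerivAt y (y' t) t)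
    (hyineq : ∀ t : ℝ, 0 < t → (t : EReal) < T → y' t ≤ g t * y t + k)
    (hyavg : ∀ t : ℝ, 0 ≤ t → ((t + τ : ℝ) : EReal) ≤ T → ∫ s in t..(t + τ), y s ≤ A)
    (hgavg : ∀ t : ℝ, 0 ≤ t → ((t + τ : ℝ) : EReal) ≤ T → ∫ s in t..(t + τ), g s ≤ B) :
    ∀ t : ℝ, 0 ≤ t → (t : EReal) < T →
      y t ≤ (y 0 + A + 2 * k) * Real.exp (2 * B) := by
  have hTbot : T ≠ ⊥ := ne_bot_of_gt hT
  have hcoe : ∀ {u v : ℝ}, u ≤ v → (v : EReal) < T → (u : EReal) < T := fun huv hvT =>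
    lt_of_le_of_lt (EReal.coe_le_coe_iff.2 huv) hvT
  -- basic facts about τ
  have hτ1 : τ ≤ 1 := by
    rw [hτ]; split_ifs with h
    · exact le_rfl
    · exact min_le_left _ _
  have hTr : T ≠ ⊤ → 0 < T.toReal := by
    intro h
    have := EReal.coe_toReal h hTbot
    rw [← this] at hT
    exact_mod_cast hT
  have hτpos : 0 < τ := by
    rw [hτ]; split_ifs with h
    · norm_num
    · exact lt_min one_pos (by linarith [hTr h])
  have hτT : (τ : EReal) < T := by
    rw [hτ]; split_ifs with h
    · rw [h]; exact EReal.coe_lt_top 1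
    · rw [← EReal.coe_toReal h hTbot]
      apply EReal.coe_lt_coe_iff.2
      have := hTr h
      calc min 1 (T.toReal / 2) ≤ T.toReal / 2 := min_le_right _ _
        _ < T.toReal := by linarith
  have hlt_toReal : ∀ {u : ℝ}, T ≠ ⊤ → (u : EReal) < T → u < T.toReal := by
    intro u h hu
    rw [← EReal.coe_toReal h hTbot] at hu
    exact_mod_cast hu
  have hy0 : 0 ≤ y 0 := hynonneg 0 le_rfl (by exact_mod_cast hT)
  -- The key Grönwall step on [a, b] ⊆ [0, T)
  have key : ∀ a b : ℝ, 0 ≤ a → a ≤ b → (b : EReal) < T →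
      y b ≤ (y a + k * (b - a)) * Real.exp (∫ s in a..b, g s) := by
    intro a b ha hab hbT
    have haT : (a : EReal) < T := hcoe hab hbT
    have hglocb : IntegrableOn g (Icc 0 b) := hgloc 0 b le_rfl hbT
    set G : ℝ → ℝ := (Icc (0:ℝ) b).indicator g with hG
    have hGint : Integrable G := hglocb.integrable_indicator measurableSet_Icc
    have hG0 : ∀ s, 0 ≤ G s := fun s => Set.indicator_nonneg (fun u _ => hg u) s
    have hGeq : ∀ s ∈ Icc a b, G s = g s := fun s hs =>
      Set.indicator_of_mem (show s ∈ Icc (0:ℝ) b from ⟨ha.trans hs.1, hs.2⟩) g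
    have hIccsub : Icc a b ⊆ {s : ℝ | 0 ≤ s ∧ (s : EReal) < T} := fun s hs =>
      ⟨ha.trans hs.1, hcoe hs.2 hbT⟩
    have hycont' : ContinuousOn y (Icc a b) := hycont.mono hIccsub
    -- integrability of g * y + k on Icc a b
    obtain ⟨C, hC⟩ := isCompact_Icc.exists_bound_of_continuousOn hycont'
    have hgyint : IntegrableOn (fun s => g s * y s) (Icc a b) := by
      have hbd : ∀ᵐ x ∂(volume.restrict (Icc a b)), ‖y x‖ ≤ C :=
        (ae_restrict_iff' measurableSet_Icc).2 (ae_of_all _ hC)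
      have := Integrable.bdd_mul (c := C)
        (hglocb.mono_set (Icc_subset_Icc ha le_rfl))
        (hycont'.aestronglyMeasurable measurableSet_Icc) hbd
      exact this.congr (ae_of_all _ fun x => mul_comm (y x) (g x))
    have hφint : IntegrableOn (fun s => g s * y s + k) (Icc a b) :=
      hgyint.add (integrableOn_const measure_Icc_lt_top.ne)
    -- the integral inequality via FTC
    have hineq2 : ∀ u ∈ Icc a b, y u ≤ (y a + k * (b - a)) + ∫ s in a..u, G s * y s := by
      intro u hu
      have hau : a ≤ u := hu.1
      have hftc : y u - y a ≤ ∫ s in a..u, (g s * y s + k) := by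
        apply intervalIntegral.sub_le_integral_of_hasDeriv_right_of_le hau
          (hycont'.mono (Icc_subset_Icc_right hu.2))
          (fun x hx => (hyderiv x (lt_of_le_of_lt ha hx.1)
            (hcoe (hx.2.le.trans hu.2) hbT)).hasDerivWithinAt)
          (hφint.mono_set (Icc_subset_Icc_right hu.2))
          (fun x hx => hyineq x (lt_of_le_of_lt ha hx.1) (hcoe (hx.2.le.trans hu.2) hbT))
      have hgyii : IntervalIntegrable (fun s => g s * y s) volume a u := by
        apply IntegrableOn.intervalIntegrable
        rw [uIcc_of_le hau]
        exact hgyint.mono_set (Icc_subset_Icc_right hu.2)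
      have hsplit : ∫ s in a..u, (g s * y s + k) = (∫ s in a..u, g s * y s) + k * (u - a) := by
        rw [intervalIntegral.integral_add hgyii intervalIntegrable_const,
          intervalIntegral.integral_const, smul_eq_mul]
        ring
      have hcongr : ∫ s in a..u, g s * y s = ∫ s in a..u, G s * y s := by
        apply intervalIntegral.integral_congr
        intro s hs
        rw [uIcc_of_le hau] at hs
        show g s * y s = G s * y s
        rw [hGeq s ⟨hs.1, hs.2.trans hu.2⟩]
      have hku : k * (u - a) ≤ k * (b - a) :=
        mul_le_mul_of_nonneg_left (by linarith [hu.2]) hk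
      rw [hsplit, hcongr] at hftc
      linarith
    have hcpos : 0 ≤ y a + k * (b - a) :=
      add_nonneg (hynonneg a ha haT) (mul_nonneg hk (by linarith))
    have := gronwall_aux G hGint hG0 y a b hab hycont' (y a + k * (b - a)) hcpos hineq2
    have hcongr2 : ∫ s in a..b, G s = ∫ s in a..b, g s := by
      apply intervalIntegral.integral_congr
      intro s hs
      rw [uIcc_of_le hab] at hs
      exact hGeq s hs
    rwa [hcongr2] at this
  -- window bound helpers
  have hg0τ : ∫ s in (0:ℝ)..τ, g s ≤ B := by
    have := hgavg 0 le_rfl (by rw [zero_add]; exact hτT.le)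
    rwa [zero_add] at this
  intro t ht0 htT
  have hgint0t : IntervalIntegrable g volume 0 t := by
    apply IntegrableOn.intervalIntegrable
    rw [uIcc_of_le ht0]
    exact hgloc 0 t le_rfl htT
  by_cases hcase : t ≤ 2 * τ
  · -- short-time case: Grönwall on [0, t]
    have Hg2B : ∫ s in (0:ℝ)..t, g s ≤ 2 * B := by
      by_cases htτ : t ≤ τ
      · have h1 : ∫ s in (0:ℝ)..t, g s ≤ ∫ s in (0:ℝ)..τ, g s := by
          apply intervalIntegral.integral_mono_interval le_rfl ht0 htτ
            (ae_restrict_of_ae (ae_of_all _ hg))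
          apply IntegrableOn.intervalIntegrable
          rw [uIcc_of_le hτpos.le]
          exact hgloc 0 τ le_rfl hτT
        linarith
      · push_neg at htτ
        have h0τ : IntervalIntegrable g volume 0 τ := by
          apply hgint0t.mono_set
          rw [uIcc_of_le hτpos.le, uIcc_of_le ht0]
          exact Icc_subset_Icc le_rfl htτ.le
        have hτt : IntervalIntegrable g volume τ t := by
          apply hgint0t.mono_set
          rw [uIcc_of_le htτ.le, uIcc_of_le ht0]
          exact Icc_subset_Icc hτpos.le le_rfl
        have hsplit : ∫ s in (0:ℝ)..t, g s = (∫ s in (0:ℝ)..τ, g s) + ∫ s in τ..t, g s :=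
          (intervalIntegral.integral_add_adjacent_intervals h0τ hτt).symm
        have h2 : ∫ s in τ..t, g s ≤ ∫ s in (t - τ)..t, g s := by
          apply intervalIntegral.integral_mono_interval (by linarith) htτ.le le_rfl
            (ae_restrict_of_ae (ae_of_all _ hg))
          apply hgint0t.mono_set
          rw [uIcc_of_le (by linarith : t - τ ≤ t), uIcc_of_le ht0]
          exact Icc_subset_Icc (by linarith) le_rfl
        have h3 : ∫ s in (t - τ)..t, g s ≤ B := by
          have htt : t - τ + τ = t := by ring
          have := hgavg (t - τ) (by linarith) (by rw [htt]; exact htT.le)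
          rwa [htt] at this
        linarith
    have hkey := key 0 t le_rfl ht0 htT
    have hfac : y 0 + k * (t - 0) ≤ y 0 + A + 2 * k := by
      have : k * (t - 0) ≤ k * 2 := by
        apply mul_le_mul_of_nonneg_left _ hk
        linarith
      linarith
    calc y t ≤ (y 0 + k * (t - 0)) * Real.exp (∫ s in (0:ℝ)..t, g s) := hkey
      _ ≤ (y 0 + A + 2 * k) * Real.exp (2 * B) := by
          apply mul_le_mul hfac (Real.exp_le_exp.2 Hg2B) (Real.exp_pos _).le
          linarith
  · -- long-time case: τ = 1 and t > 2
    push_neg at hcase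
    have hτeq : τ = 1 := by
      rw [hτ]; split_ifs with h
      · rfl
      · rw [hτ, if_neg h] at hcase hτpos hτ1
        by_cases h1 : T.toReal / 2 ≤ 1
        · exfalso
          rw [min_eq_right h1] at hcase
          have := hlt_toReal h htT
          linarith
        · push_neg at h1
          exact min_eq_left h1.le
    rw [hτeq] at hcase
    have ht2 : 2 < t := by linarith
    have hsub : Icc (t - 1) t ⊆ {s : ℝ | 0 ≤ s ∧ (s : EReal) < T} := fun s hs =>
      ⟨by linarith [hs.1], hcoe hs.2 htT⟩
    have hycont' : ContinuousOn y (Icc (t - 1) t) := hycont.mono hsub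
    obtain ⟨s₀, hs₀mem, hs₀min⟩ := isCompact_Icc.exists_isMinOn
      (nonempty_Icc.2 (by linarith : t - 1 ≤ t)) hycont'
    have hyii : IntervalIntegrable y volume (t - 1) t :=
      ContinuousOn.intervalIntegrable
        (by rw [uIcc_of_le (by linarith : t - 1 ≤ t)]; exact hycont')
    have hys₀ : y s₀ ≤ A := by
      have h1 : ∫ _ in (t - 1)..t, y s₀ ≤ ∫ s in (t - 1)..t, y s := by
        apply intervalIntegral.integral_mono_on (by linarith) intervalIntegrable_const hyii
        intro x hx
        exact hs₀min hx
      rw [intervalIntegral.integral_const, smul_eq_mul] at h1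
      have h2 : (t - (t - 1)) * y s₀ = y s₀ := by ring_nf
      rw [h2] at h1
      have htt : t - 1 + 1 = t := by ring
      have h3 := hyavg (t - 1) (by linarith) (by rw [hτeq, htt]; exact htT.le)
      rw [hτeq, htt] at h3
      linarith
    have hexp2B : (1:ℝ) ≤ Real.exp (2 * B) := Real.one_le_exp (by linarith)
    rcases eq_or_lt_of_le hs₀mem.2 with hs₀t | hs₀t
    · rw [← hs₀t]
      calc y s₀ ≤ A := hys₀
        _ ≤ (y 0 + A + 2 * k) * 1 := by linarith
        _ ≤ (y 0 + A + 2 * k) * Real.exp (2 * B) := by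
            apply mul_le_mul_of_nonneg_left hexp2B (by linarith)
    · have hkey := key s₀ t (by linarith [hs₀mem.1]) hs₀t.le htT
      have hgB : ∫ s in s₀..t, g s ≤ B := by
        have hgii : IntervalIntegrable g volume (t - 1) t := by
          apply IntegrableOn.intervalIntegrable
          rw [uIcc_of_le (by linarith : t - 1 ≤ t)]
          exact hgloc (t - 1) t (by linarith) htT
        have h1 : ∫ s in s₀..t, g s ≤ ∫ s in (t - 1)..t, g s :=
          intervalIntegral.integral_mono_interval hs₀mem.1 hs₀t.le le_rfl
            (ae_restrict_of_ae (ae_of_all _ hg)) hgii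
        have htt : t - 1 + 1 = t := by ring
        have h2 := hgavg (t - 1) (by linarith) (by rw [hτeq, htt]; exact htT.le)
        rw [hτeq, htt] at h2
        linarith
      have hfac : y s₀ + k * (t - s₀) ≤ y 0 + A + 2 * k := by
        have h1 : k * (t - s₀) ≤ k * 1 := by
          apply mul_le_mul_of_nonneg_left _ hk
          linarith [hs₀mem.1]
        linarith
      calc y t ≤ (y s₀ + k * (t - s₀)) * Real.exp (∫ s in s₀..t, g s) := hkey
        _ ≤ (y 0 + A + 2 * k) * Real.exp (2 * B) := by
            apply mul_le_mul hfac (Real.exp_le_exp.2 (by linarith)) (Real.exp_pos _).le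
            linarith
end

section
/- For every real number a > 0 one has a^{4/3}·|ln a|^{4/3} ≤ 16·e^{−4/3}·a^{3/2} + e^{−4/3}. -/
open Real

/-- `log x ≤ x / e` for `x > 0`. -/
lemma log_le_div_exp_one (x : ℝ) (hx : 0 < x) : Real.log x ≤ x * Real.exp (-1) := by
  have h : Real.log (x * Real.exp (-1)) ≤ x * Real.exp (-1) - 1 :=
    Real.log_le_sub_one_of_pos (by positivity)
  rw [Real.log_mul hx.ne' (Real.exp_pos _).ne', Real.log_exp] at h
  linarith

/-- The elementary inequality `a^{4/3} |ln a|^{4/3} ≤ 16 e^{−4/3} a^{3/2} + e^{−4/3}`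
for `a > 0`, used in the proof of Lemma `LEMLOGL`. -/
theorem rpow_mul_abs_log_rpow_le_four_thirds (a : ℝ) (ha : 0 < a) :
    a ^ ((4 : ℝ) / 3) * |Real.log a| ^ ((4 : ℝ) / 3) ≤
      16 * Real.exp (-(4 / 3)) * a ^ ((3 : ℝ) / 2) + Real.exp (-(4 / 3)) := by
  rcases le_total a 1 with h1 | h1
  · -- small case: a ≤ 1
    have hlog : Real.log a ≤ 0 := Real.log_nonpos ha.le h1
    have habs : |Real.log a| = -Real.log a := abs_of_nonpos hlog
    have key : a * |Real.log a| ≤ Real.exp (-1) := by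
      rw [habs]
      have h2 : Real.log (1 / a) ≤ (1 / a) * Real.exp (-1) :=
        log_le_div_exp_one _ (by positivity)
      rw [Real.log_div one_ne_zero ha.ne', Real.log_one] at h2
      have := mul_le_mul_of_nonneg_left h2 ha.le
      calc a * -Real.log a = a * (0 - Real.log a) := by ring
        _ ≤ a * (1 / a * Real.exp (-1)) := this
        _ = Real.exp (-1) := by field_simp
    have hLHS : a ^ ((4 : ℝ) / 3) * |Real.log a| ^ ((4 : ℝ) / 3)
        = (a * |Real.log a|) ^ ((4 : ℝ) / 3) :=
      (Real.mul_rpow ha.le (abs_nonneg _)).symm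
    have h3 : (a * |Real.log a|) ^ ((4 : ℝ) / 3) ≤ (Real.exp (-1)) ^ ((4 : ℝ) / 3) :=
      Real.rpow_le_rpow (by positivity) key (by norm_num)
    have h4 : (Real.exp (-1) : ℝ) ^ ((4 : ℝ) / 3) = Real.exp (-(4 / 3)) := by
      rw [← Real.exp_mul]; norm_num
    have hpos : (0:ℝ) ≤ 16 * Real.exp (-(4 / 3)) * a ^ ((3 : ℝ) / 2) := by positivity
    rw [hLHS]
    linarith [h3, h4.le, h4.ge]
  · -- large case: a ≥ 1
    have hlog : 0 ≤ Real.log a := Real.log_nonneg h1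
    have habs : |Real.log a| = Real.log a := abs_of_nonneg hlog
    have key : Real.log a ≤ 8 * (a ^ ((1:ℝ)/8) * Real.exp (-1)) := by
      have h2 := log_le_div_exp_one (a ^ ((1:ℝ)/8)) (by positivity)
      rw [Real.log_rpow ha] at h2
      linarith
    have h3 : |Real.log a| ^ ((4 : ℝ) / 3)
        ≤ (8 * (a ^ ((1:ℝ)/8) * Real.exp (-1))) ^ ((4 : ℝ) / 3) := by
      rw [habs]
      exact Real.rpow_le_rpow hlog key (by norm_num)
    have h8 : (8:ℝ) ^ ((4:ℝ)/3) = 16 := by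
      rw [show (8:ℝ) = 2 ^ (3:ℝ) from by
          rw [show (3:ℝ) = ((3:ℕ):ℝ) by norm_num, Real.rpow_natCast]; norm_num,
        ← Real.rpow_mul (by norm_num)]
      rw [show (3:ℝ) * (4/3) = ((4:ℕ):ℝ) by norm_num, Real.rpow_natCast]; norm_num
    have h4 : (8 * (a ^ ((1:ℝ)/8) * Real.exp (-1))) ^ ((4 : ℝ) / 3)
        = 16 * Real.exp (-(4/3)) * a ^ ((1:ℝ)/6) := by
      rw [Real.mul_rpow (by norm_num) (by positivity),
        Real.mul_rpow (by positivity) (Real.exp_pos _).le, h8,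
        ← Real.rpow_mul ha.le, ← Real.exp_mul]
      norm_num; ring
    have h5 : a ^ ((4 : ℝ) / 3) * |Real.log a| ^ ((4 : ℝ) / 3)
        ≤ a ^ ((4 : ℝ) / 3) * (16 * Real.exp (-(4/3)) * a ^ ((1:ℝ)/6)) := by
      apply mul_le_mul_of_nonneg_left _ (by positivity)
      rw [← h4]; exact h3
    have h6 : a ^ ((4 : ℝ) / 3) * (16 * Real.exp (-(4/3)) * a ^ ((1:ℝ)/6))
        = 16 * Real.exp (-(4/3)) * a ^ ((3:ℝ)/2) := by
      rw [show (3:ℝ)/2 = (4:ℝ)/3 + (1:ℝ)/6 by norm_num, Real.rpow_add ha]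
      ring
    have hexp : (0:ℝ) ≤ Real.exp (-(4/3)) := (Real.exp_pos _).le
    linarith [h5, h6.le, h6.ge]
end
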